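/- arXiv:2201.08376 — 10 statements merged into one kernel-verified Lean document; each statement's English description precedes it below -/
import Mathlib

section
/- Let q be an odd prime power, let k be a positive integer (k ≠ 0), and let f(x) = a·x^{p^k+1} + d·x^{p^k} + b·x + c ∈ F_q[x], where p is the characteristic of F_q. If f(x) = g(x)^2 for some polynomial g ∈ F_q[x], then either (d^{p^k}·a = b·a^{p^k} and d^{p^k+1}·a = c·a^{p^k+1}) or a = b = d = 0. -/
open Polynomial

/-- If `q` is odd and `f(x) = a x^{p^k+1} + d x^{p^k} + b x + c ∈ F_q[x]` (`k ≠ 0`, `p` the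
characteristic) is the square of a polynomial, then `d^{p^k} a = b a^{p^k}` and
`d^{p^k+1} a = c a^{p^k+1}`, or `a = b = d = 0`. -/
theorem stmt1 (F : Type*) [Field F] [Fintype F] (p : ℕ) [Fact p.Prime] [CharP F p]
    (hodd : Odd (Fintype.card F)) (k : ℕ) (hk : k ≠ 0) (a b c d : F) (g : Polynomial F)
    (hf : C a * X ^ (p ^ k + 1) + C d * X ^ (p ^ k) + C b * X + C c = g ^ 2) :
    (d ^ (p ^ k) * a = b * a ^ (p ^ k) ∧ d ^ (p ^ k + 1) * a = c * a ^ (p ^ k + 1)) ∨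
      (a = 0 ∧ b = 0 ∧ d = 0) := by
  have hp : p.Prime := Fact.out
  have hrc : ringChar F = p := ringChar.eq F p
  have hp2 : p ≠ 2 := by
    intro h
    have := FiniteField.even_card_of_char_two (F := F) (hrc.trans h)
    rw [Nat.odd_iff] at hodd; omega

  have hpodd : Odd p := hp.odd_of_ne_two hp2
  have hp3 : 3 ≤ p := by
    rcases hp.two_le.lt_or_eq with h | h
    · omega
    · exact absurd h.symm hp2
  have hN3 : 3 ≤ p ^ k := le_trans hp3 (Nat.le_self_pow hk p)
  set N := p ^ k with hN
  -- even degree of g^2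
  by_cases ha : a = 0
  · subst ha
    by_cases hd : d = 0
    · subst hd
      by_cases hb : b = 0
      · exact Or.inr ⟨rfl, hb, rfl⟩
      · exfalso
        have hfd : (C (0:F) * X ^ (N + 1) + C 0 * X ^ N + C b * X + C c).natDegree = 1 := by
          simp only [map_zero, zero_mul, zero_add]
          compute_degree!
        rw [hf, natDegree_pow] at hfd
        omega
    · exfalso
      have hfd : (C (0:F) * X ^ (N + 1) + C d * X ^ N + C b * X + C c).natDegree = N := by
        simp only [map_zero, zero_mul, zero_add]
        compute_degree!
        · simp [show ¬ N = 1 by omega, show ¬ N = 0 by omega, hd]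
        · omega
        · omega
      rw [hf, natDegree_pow] at hfd
      have hoN : Odd N := hpodd.pow
      rw [Nat.odd_iff] at hoN
      omega
  · -- main case
    left
    -- surjectivity of x ↦ x ^ N
    have hinj : Function.Injective (fun x : F => x ^ N) := by
      intro x y hxy
      have : (x - y) ^ N = 0 := by
        rw [hN, sub_pow_char_pow]
        simpa using sub_eq_zero_of_eq hxy
      have := pow_eq_zero_iff (n := N) (by omega) |>.mp this
      exact sub_eq_zero.mp this
    obtain ⟨e, he'⟩ := Finite.surjective_of_injective hinj (b * a⁻¹)
    have he : e ^ N = b * a⁻¹ := he'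
    have hbe : a * e ^ N = b := by
      rw [he]; field_simp
    -- derivative
    have hNcast : (N : F) = 0 := by
      rw [hN, Nat.cast_pow, CharP.cast_eq_zero F p, zero_pow hk]
    have hder : C a * X ^ N + C b = C 2 * g * derivative g := by
      have := congrArg derivative hf
      rw [derivative_pow] at this
      simp only [derivative_add, derivative_mul, derivative_C, derivative_X_pow,
        derivative_X, zero_mul, zero_add, mul_one, Nat.add_sub_cancel,
        Nat.cast_add, Nat.cast_one, hNcast, zero_add, map_add, map_zero,
        pow_one] at this
      norm_num at this
      convert this using 2
    have hXe : C a * (X + C e) ^ N = C a * X ^ N + C b := by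
      rw [hN, add_pow_char_pow, ← C_pow, ← hN, mul_add, ← C_mul, hbe]
    set q : F[X] := X - C (-e) with hqdef
    have hq : q = X + C e := by rw [hqdef, map_neg, sub_neg_eq_add]
    have hqp : Prime q := prime_X_sub_C (-e)
    have hgd : g ∣ q ^ N := by
      have h1 : g ∣ C a * (X + C e) ^ N := by
        rw [hXe, hder]; exact ⟨C 2 * derivative g, by ring⟩
      have h2 : C a⁻¹ * (C a * (X + C e) ^ N) = q ^ N := by
        rw [← mul_assoc, ← C_mul, inv_mul_cancel₀ ha, C_1, one_mul, hq]
      exact h2 ▸ Dvd.dvd.mul_left h1 (C a⁻¹)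
    obtain ⟨m, hm, hass⟩ := (dvd_prime_pow hqp N).mp hgd
    have hass2 : Associated (g ^ 2) (q ^ (2 * m)) := by
      rw [two_mul, pow_add, sq]
      exact hass.mul_mul hass
    obtain ⟨v, hv⟩ := hass2.symm
    obtain ⟨r, hrU, hCr⟩ := Polynomial.isUnit_iff.mp v.isUnit
    have hr0 : r ≠ 0 := hrU.ne_zero
    have hfeq : C a * X ^ (N + 1) + C d * X ^ N + C b * X + C c = q ^ (2 * m) * C r := by
      rw [hf, ← hv, hCr]
    -- degrees
    have hdegf : (C a * X ^ (N + 1) + C d * X ^ N + C b * X + C c).natDegree = N + 1 := by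
      compute_degree!
      all_goals first
        | omega
        | simp [show ¬ N + 1 = N by omega, show ¬ N + 1 = 1 by omega,
            show ¬ N + 1 = 0 by omega, show ¬ N = 0 by omega,
            show ¬ N = 1 by omega, ha]
    have hdegq : (q ^ (2 * m) * C r).natDegree = 2 * m := by
      rw [natDegree_mul (pow_ne_zero _ hqp.ne_zero) (by simpa using hr0),
        natDegree_pow, natDegree_C, hqdef, natDegree_X_sub_C]
      ring
    have hm2 : 2 * m = N + 1 := by rw [← hdegq, ← hfeq, hdegf]
    -- leading coefficient
    have hlc : a = r := by
      have h : (C a * X ^ (N + 1) + C d * X ^ N + C b * X + C c).coeff (N + 1)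
          = (q ^ (2 * m) * C r).coeff (N + 1) := by rw [hfeq]
      have h2 : (q ^ (2 * m) * C r).coeff (N + 1) = r := by
        have hnd : (q ^ (2 * m) * C r).natDegree = N + 1 := hdegq.trans hm2
        rw [← hnd, coeff_natDegree, leadingCoeff_mul, leadingCoeff_pow, hqdef,
          leadingCoeff_X_sub_C, one_pow, one_mul, leadingCoeff_C]
      rw [h2] at h
      rw [← h]
      simp [coeff_X_pow, coeff_C, coeff_X, show ¬ (N + 1 = N) by omega,
        show ¬ (N + 1 = 1) by omega, show ¬ (N + 1 = 0) by omega,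
        show ¬ (N = 0) by omega, show ¬ (N = 1) by omega]
    have hexp : q ^ (N + 1) * C a
        = C a * X ^ (N + 1) + C (a * e) * X ^ N + C (a * e ^ N) * X + C (a * e ^ (N + 1)) := by
      have hqN : q ^ N = X ^ N + C (e ^ N) := by
        rw [hq, hN, add_pow_char_pow, ← C_pow]
      rw [pow_succ, hqN, hq]
      simp only [map_mul, map_pow]
      ring
    rw [hm2, ← hlc, hexp] at hfeq
    have hdN : (C a * X ^ (N + 1) + C d * X ^ N + C b * X + C c).coeff N
        = (C a * X ^ (N + 1) + C (a * e) * X ^ N + C (a * e ^ N) * X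
          + C (a * e ^ (N + 1))).coeff N := by rw [hfeq]
    have h0 : (C a * X ^ (N + 1) + C d * X ^ N + C b * X + C c).coeff 0
        = (C a * X ^ (N + 1) + C (a * e) * X ^ N + C (a * e ^ N) * X
          + C (a * e ^ (N + 1))).coeff 0 := by rw [hfeq]
    simp only [coeff_add, coeff_C_mul, coeff_X_pow, coeff_C, coeff_X,
      if_neg (show ¬ N = N + 1 by omega), if_neg (show ¬ (1:ℕ) = N by omega),
      if_neg (show ¬ N = 1 by omega), if_neg (show ¬ N = 0 by omega),
      if_neg (show ¬ (0:ℕ) = N + 1 by omega), if_neg (show ¬ (1:ℕ) = 0 by omega),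
      if_neg (show ¬ (0:ℕ) = N by omega), if_neg (show ¬ (1:ℕ) = N + 1 by omega),
      if_pos (rfl : N = N), if_pos (rfl : (0:ℕ) = 0), if_pos (rfl : (1:ℕ) = 1),
      ite_true, if_true, ite_self, eq_self_iff_true,
      mul_one, mul_zero, add_zero, zero_add] at hdN h0
    refine ⟨?_, ?_⟩
    · rw [hdN, ← hbe, mul_pow]; ring
    · rw [hdN, h0, mul_pow]; ring
end

section
/- Let q > 9 be an odd prime power that is a square. Suppose D ⊆ F_q has size |D| > q − √q/2 + 1/2, and the function x ↦ ℓ(x) := a·x^{√q+1} + d·x^{√q} + b·x + c with a ≠ 0 has the property that ℓ(x) is a square in F_q for every x ∈ D. Then a^{√q}·b = d^{√q}·a. -/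
open Finset Polynomial

/-- Auxiliary: `2*m ≤ 2 + (m*m - m)` for naturals. -/
lemma two_mul_le_aux (m : ℕ) : 2 * m ≤ 2 + (m * m - m) := by
  induction m with
  | zero => simp
  | succ k _ =>
    have h1 : (k + 1) * (k + 1) = (k * k + k) + (k + 1) := by ring
    rw [h1, Nat.add_sub_cancel]
    have hk : k ≤ k * k := by
      rcases Nat.eq_zero_or_pos k with h | h
      · simp [h]
      · calc k = 1 * k := (one_mul k).symm
          _ ≤ k * k := Nat.mul_le_mul_right k h
    linarith

/-- The number of roots of `X^r + X + c` is at most `r` (for `2 ≤ r`). -/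
lemma root_count_aux {F : Type*} [Field F] [Fintype F] [DecidableEq F] {r : ℕ} (hr : 2 ≤ r)
    (c : F) : (Finset.univ.filter fun w : F => w ^ r + w + c = 0).card ≤ r := by
  set P : F[X] := X ^ r + X + C c with hP
  have h2 : P.coeff r = 1 := by
    rw [hP, coeff_add, coeff_add, coeff_X_pow, if_pos rfl, coeff_C,
      if_neg (by omega : ¬ r = 0)]
    have hx : (X : F[X]).coeff r = 0 := by
      rw [coeff_X, if_neg (by omega : ¬ 1 = r)]
    rw [hx]
    ring
  have hPne : P ≠ 0 := fun hcon => one_ne_zero (α := F) (by rw [← h2, hcon, coeff_zero])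
  have hdeg : P.natDegree ≤ r := by
    rw [hP]
    refine (natDegree_add_le _ _).trans (max_le ((natDegree_add_le _ _).trans (max_le ?_ ?_)) ?_)
    · exact le_of_eq (natDegree_X_pow r)
    · rw [natDegree_X]; omega
    · rw [natDegree_C]; omega
  have hsubset : (Finset.univ.filter fun w : F => w ^ r + w + c = 0) ⊆ P.roots.toFinset := by
    intro w hw
    rw [Finset.mem_filter] at hw
    rw [Multiset.mem_toFinset, mem_roots']
    refine ⟨hPne, ?_⟩
    rw [hP]
    simp only [IsRoot.def, eval_add, eval_pow, eval_X, eval_C]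
    exact hw.2
  calc (Finset.univ.filter fun w : F => w ^ r + w + c = 0).card
      ≤ P.roots.toFinset.card := Finset.card_le_card hsubset
    _ ≤ Multiset.card P.roots := Multiset.toFinset_card_le _
    _ ≤ P.natDegree := card_roots' P
    _ ≤ r := hdeg

/-- Let `q > 9` be an odd square prime power with `q = r^2`. If `D ⊆ F_q` has size
`|D| > q − √q/2 + 1/2` and `ℓ(x) = a x^{√q+1} + d x^{√q} + b x + c` (`a ≠ 0`) is a square
in `F_q` for every `x ∈ D`, then `a^{√q} b = d^{√q} a`. -/
theorem stmt2 (F : Type*) [Field F] [Fintype F] (r : ℕ)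
    (hcard : Fintype.card F = r ^ 2) (hodd : Odd (Fintype.card F))
    (hq : 9 < Fintype.card F)
    (D : Finset F)
    (hD : (Fintype.card F : ℝ) - (r : ℝ) / 2 + 1 / 2 < (D.card : ℝ))
    (a b c d : F) (ha : a ≠ 0)
    (hsq : ∀ x ∈ D, IsSquare (a * x ^ (r + 1) + d * x ^ r + b * x + c)) :
    a ^ r * b = d ^ r * a := by
  classical
  by_contra hne
  -- basic numerology
  have h9 : 9 < r ^ 2 := hcard ▸ hq
  have hr2 : 2 ≤ r := by
    by_contra hcon
    push_neg at hcon
    have h1 : r ^ 2 ≤ 1 ^ 2 := Nat.pow_le_pow_left (by omega) 2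
    have h2 : (1:ℕ) ^ 2 = 1 := one_pow 2
    linarith
  have hq2 : Fintype.card F = r * r := by rw [hcard]; ring
  have hoddr : Odd r := by
    have : Odd (r * r) := by rwa [hq2] at hodd
    exact (Nat.odd_mul.mp this).1
  -- characteristic and Frobenius facts
  haveI hCP := ringChar.charP F
  obtain ⟨n, hpprime, hcardp⟩ := FiniteField.card F (ringChar F)
  haveI : Fact (Nat.Prime (ringChar F)) := ⟨hpprime⟩
  have hrdvd : r ∣ ringChar F ^ (n : ℕ) := by
    rw [← hcardp, hq2]
    exact Dvd.intro r rfl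
  obtain ⟨m, hmn, hrm⟩ := (Nat.dvd_prime_pow hpprime).mp hrdvd
  have hadd : ∀ x y : F, (x + y) ^ r = x ^ r + y ^ r := by
    intro x y
    rw [hrm]
    exact add_pow_char_pow ..
  have hpowz : ∀ z : F, (z ^ r) ^ r = z := by
    intro z
    rw [← pow_mul, ← hq2, FiniteField.pow_card]
  have hsub : ∀ x y : F, (x - y) ^ r = x ^ r - y ^ r := by
    intro x y
    have h := hadd (x - y) y
    rw [sub_add_cancel] at h
    linear_combination -h
  -- the change of variables
  obtain ⟨e, he⟩ : ∃ e : F, a * e = d := ⟨d / a, by field_simp⟩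
  obtain ⟨γ, hγ⟩ : ∃ γ : F, a * γ = b - a * e ^ r := ⟨(b - a * e ^ r) / a, by field_simp⟩
  have hγ0 : γ ≠ 0 := by
    intro h0
    apply hne
    rw [h0, mul_zero] at hγ
    have hb : b = a * e ^ r := by linear_combination -hγ
    calc a ^ r * b = a * (a * e) ^ r := by rw [hb, mul_pow]; ring
      _ = d ^ r * a := by rw [he]; ring
  set α := γ ^ r with hα
  have hα0 : α ≠ 0 := pow_ne_zero _ hγ0
  -- key identity
  have key : ∀ w : F,
      a * (α * w - e) ^ (r + 1) + d * (α * w - e) ^ r + b * (α * w - e) + c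
        = (a * γ * α) * (w ^ (r + 1) + w) + (a * e * e ^ r - d * e ^ r - b * e + c) := by
    intro w
    have hx : (α * w - e) ^ r = γ * w ^ r - e ^ r := by
      rw [hsub, mul_pow, hα, hpowz]
    rw [pow_succ, hx, pow_succ w]
    linear_combination (-(γ * w ^ r)) * he - (α * w) * hγ
  set A := a * γ * α with hAdef
  have hA0 : A ≠ 0 := by
    rw [hAdef]
    exact mul_ne_zero (mul_ne_zero ha hγ0) hα0
  set u0 : F := a * e * e ^ r - d * e ^ r - b * e + c with hu0
  -- collision lemma for h(w) = w^(r+1) + w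
  have hcollE : ∀ y u : F, u ≠ 0 →
      (y + u) ^ (r + 1) + (y + u) = y ^ (r + 1) + y → u ^ r = u := by
    intro y u hu hcol
    rw [pow_succ, hadd y u, pow_succ y] at hcol
    have hE : u * y ^ r + u ^ r * y + u ^ r * u + u = 0 := by linear_combination hcol
    have h2 : u * y ^ r = -(u ^ r * y + u ^ r * u + u) := by linear_combination hE
    have h4 : (u * y ^ r) ^ r = (-(u ^ r * y + u ^ r * u + u)) ^ r := by rw [h2]
    have hL : (u * y ^ r) ^ r = u ^ r * y := by rw [mul_pow, hpowz]
    have hR : (-(u ^ r * y + u ^ r * u + u)) ^ r = -(u * y ^ r + u * u ^ r + u ^ r) := by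
      rw [hoddr.neg_pow, hadd, hadd, mul_pow, mul_pow, hpowz u]
    have h3 : u ^ r * y = -(u * y ^ r + u * u ^ r + u ^ r) := by rw [← hL, h4, hR]
    linear_combination h3 - hE
  -- the image H and the collision set T
  set H := Finset.univ.image (fun w : F => w ^ (r + 1) + w) with hH
  set T := Finset.univ.filter
    (fun pr : F × F => pr.1 ≠ pr.2 ∧ pr.1 ^ (r + 1) + pr.1 = pr.2 ^ (r + 1) + pr.2) with hT
  -- q = sum of fiber sizes
  have hq_sum : Fintype.card F
      = ∑ v ∈ H, (Finset.univ.filter fun w : F => w ^ (r + 1) + w = v).card := by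
    rw [← Finset.card_univ]
    exact Finset.card_eq_sum_card_fiberwise
      (fun x _ => Finset.mem_image_of_mem (fun w : F => w ^ (r + 1) + w) (Finset.mem_univ x))
  -- T's size as a sum over fibers
  have hT_sum : T.card = ∑ v ∈ H,
      ((Finset.univ.filter fun w : F => w ^ (r + 1) + w = v).card *
        (Finset.univ.filter fun w : F => w ^ (r + 1) + w = v).card -
        (Finset.univ.filter fun w : F => w ^ (r + 1) + w = v).card) := by
    rw [Finset.card_eq_sum_card_fiberwise (f := fun pr : F × F => pr.1 ^ (r + 1) + pr.1)
      (t := H) (fun pr _ => Finset.mem_image_of_mem (fun w : F => w ^ (r + 1) + w)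
        (Finset.mem_univ pr.1))]
    refine Finset.sum_congr rfl fun v hv => ?_
    rw [← Finset.offDiag_card]
    congr 1
    ext ⟨x, y⟩
    simp only [hT, Finset.mem_filter, Finset.mem_univ, true_and, Finset.mem_offDiag]
    constructor
    · rintro ⟨⟨hxy, hcol⟩, hxv⟩
      exact ⟨hxv, by rw [← hcol]; exact hxv, hxy⟩
    · rintro ⟨hxv, hyv, hxy⟩
      exact ⟨⟨hxy, by rw [hxv, hyv]⟩, hxv⟩
  -- main inequality (i)
  have h2q : 2 * Fintype.card F ≤ 2 * H.card + T.card := by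
    calc 2 * Fintype.card F
        = ∑ v ∈ H, 2 * (Finset.univ.filter fun w : F => w ^ (r + 1) + w = v).card := by
          rw [hq_sum, Finset.mul_sum]
      _ ≤ ∑ v ∈ H, (2 + ((Finset.univ.filter fun w : F => w ^ (r + 1) + w = v).card *
            (Finset.univ.filter fun w : F => w ^ (r + 1) + w = v).card -
            (Finset.univ.filter fun w : F => w ^ (r + 1) + w = v).card)) :=
          Finset.sum_le_sum fun v _ => two_mul_le_aux _
      _ = 2 * H.card + T.card := by
          rw [Finset.sum_add_distrib, Finset.sum_const, smul_eq_mul, hT_sum, mul_comm]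
  -- collision bound (ii)
  set U := (Polynomial.nthRoots (r - 1) (1 : F)).toFinset with hU
  have hUcard : U.card ≤ r - 1 :=
    (Multiset.toFinset_card_le _).trans (Polynomial.card_nthRoots _ _)
  have hTmaps : ∀ pr ∈ T, pr.1 - pr.2 ∈ U := by
    intro pr hpr
    rw [hT, Finset.mem_filter] at hpr
    obtain ⟨-, hxy, hcol⟩ := hpr
    have hu0' : pr.1 - pr.2 ≠ 0 := sub_ne_zero.mpr hxy
    have hx : pr.1 = pr.2 + (pr.1 - pr.2) := by ring
    have hur : (pr.1 - pr.2) ^ r = pr.1 - pr.2 := by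
      refine hcollE pr.2 _ hu0' ?_
      rw [← hx]
      exact hcol
    rw [hU, Multiset.mem_toFinset, Polynomial.mem_nthRoots (by omega : 0 < r - 1)]
    have h1 : (pr.1 - pr.2) ^ (r - 1) * (pr.1 - pr.2) = (pr.1 - pr.2) ^ r := by
      rw [← pow_succ]
      congr 1
      omega
    refine mul_right_cancel₀ hu0' ?_
    rw [h1, hur, one_mul]
  have hTcard : T.card ≤ (r - 1) * r := by
    rw [Finset.card_eq_sum_card_fiberwise hTmaps]
    calc ∑ u ∈ U, (T.filter fun pr => pr.1 - pr.2 = u).card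
        ≤ ∑ _u ∈ U, r := by
          refine Finset.sum_le_sum fun u hu => ?_
          have hu1 : u ^ (r - 1) = 1 := by
            rw [hU, Multiset.mem_toFinset,
              Polynomial.mem_nthRoots (by omega : 0 < r - 1)] at hu
            exact hu
          have hu0' : u ≠ 0 := by
            rintro rfl
            rw [zero_pow (by omega : r - 1 ≠ 0)] at hu1
            exact zero_ne_one hu1
          have hur : u ^ r = u := by
            have h1 : u ^ (r - 1) * u = u ^ r := by
              rw [← pow_succ]; congr 1; omega
            rw [← h1, hu1, one_mul]
          refine le_trans (Finset.card_le_card_of_injOn (fun pr => pr.2) ?_ ?_)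
            (root_count_aux hr2 (u + 1))
          · intro pr hpr
            simp only [Finset.mem_coe, Finset.mem_filter] at hpr
            obtain ⟨hprT, hpru⟩ := hpr
            rw [hT, Finset.mem_filter] at hprT
            obtain ⟨-, hxy, hcol⟩ := hprT
            simp only [Finset.mem_coe, Finset.mem_filter]
            refine ⟨Finset.mem_univ _, ?_⟩
            have hx : pr.1 = pr.2 + u := by rw [← hpru]; ring
            rw [hx, pow_succ, hadd pr.2 u, pow_succ pr.2] at hcol
            have hE : u * pr.2 ^ r + u ^ r * pr.2 + u ^ r * u + u = 0 := by
              linear_combination hcol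
            have h5 : u * (pr.2 ^ r + pr.2 + (u + 1)) = 0 := by
              linear_combination hE - (pr.2 + u) * hur
            rcases mul_eq_zero.mp h5 with h | h
            · exact absurd h hu0'
            · exact h
          · intro p1 h1 p2 h2 hp12
            simp only [Finset.mem_coe, Finset.mem_filter] at h1 h2
            have hp12' : p1.2 = p2.2 := hp12
            have hh1 : p1.1 = p2.1 := by
              rw [show p1.1 = p1.2 + u from by rw [← h1.2]; ring,
                show p2.1 = p2.2 + u from by rw [← h2.2]; ring, hp12']
            exact Prod.ext hh1 hp12'
      _ = U.card * r := by rw [Finset.sum_const, smul_eq_mul]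
      _ ≤ (r - 1) * r := Nat.mul_le_mul_right r hUcard
  -- image of h is large
  have hTr : T.card + r ≤ r * r := by
    obtain ⟨k, rfl⟩ : ∃ k, r = k + 1 := ⟨r - 1, by omega⟩
    have h1 : (k + 1 - 1) * (k + 1) + (k + 1) = (k + 1) * (k + 1) := by
      simp only [Nat.add_sub_cancel]
      ring
    have := hTcard
    linarith
  have hHcard : Fintype.card F + r ≤ 2 * H.card := by
    have h1 := h2q
    rw [hq2] at h1 ⊢
    linarith
  -- g and its image
  set g : F → F := fun x => (a * x ^ (r + 1) + d * x ^ r + b * x + c - u0) / A with hg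
  set G := Finset.univ.image g with hG
  have hginv : ∀ x : F, A * g x + u0 = a * x ^ (r + 1) + d * x ^ r + b * x + c := by
    intro x
    simp only [hg]
    field_simp
    ring
  have hHsubG : H ⊆ G := by
    intro v hv
    rw [hH, Finset.mem_image] at hv
    obtain ⟨w, -, hw⟩ := hv
    have hw' : w ^ (r + 1) + w = v := hw
    refine Finset.mem_image.mpr ⟨α * w - e, Finset.mem_univ _, ?_⟩
    have h1 : A * g (α * w - e) + u0 = A * v + u0 := by
      rw [hginv, key w, hw']
    exact mul_left_cancel₀ hA0 (add_right_cancel h1)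
  have hGcard : Fintype.card F + r ≤ 2 * G.card :=
    hHcard.trans (by
      have := Finset.card_le_card hHsubG
      omega)
  -- squares are at most (q+1)/2
  have hchar2 : ringChar F ≠ 2 := by
    intro h2
    have h3 := FiniteField.even_card_of_char_two h2
    have h4 := Nat.odd_iff.mp hodd
    omega
  have hSQ : 2 * (Finset.univ.filter (fun z : F => IsSquare z)).card ≤ Fintype.card F + 1 := by
    have hsubSQ : (Finset.univ.filter (fun z : F => IsSquare z)) ⊆
        insert (0 : F) (Polynomial.nthRoots (Fintype.card F / 2) (1 : F)).toFinset := by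
      intro z hz
      rw [Finset.mem_filter] at hz
      rcases eq_or_ne z 0 with rfl | hz0
      · exact Finset.mem_insert_self _ _
      · refine Finset.mem_insert_of_mem ?_
        rw [Multiset.mem_toFinset,
          Polynomial.mem_nthRoots (by omega : 0 < Fintype.card F / 2)]
        exact (FiniteField.isSquare_iff hchar2 hz0).mp hz.2
    have h1 := (Finset.card_le_card hsubSQ).trans (Finset.card_insert_le _ _)
    have h5 := (Multiset.toFinset_card_le
      (Polynomial.nthRoots (Fintype.card F / 2) (1 : F))).trans
      (Polynomial.card_nthRoots _ _)
    have h4 := Nat.odd_iff.mp hodd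
    omega
  -- bad values
  set Vbad := G.filter (fun v => ¬ IsSquare (A * v + u0)) with hVbad
  have hVcard : G.card ≤ Vbad.card + (Finset.univ.filter (fun z : F => IsSquare z)).card := by
    have hsplit : G.card ≤ Vbad.card + (G.filter (fun v => IsSquare (A * v + u0))).card := by
      have hsub2 : G ⊆ Vbad ∪ G.filter (fun v => IsSquare (A * v + u0)) := by
        intro v hv
        by_cases hvs : IsSquare (A * v + u0)
        · exact Finset.mem_union_right _ (Finset.mem_filter.mpr ⟨hv, hvs⟩)
        · refine Finset.mem_union_left _ ?_
          rw [hVbad]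
          exact Finset.mem_filter.mpr ⟨hv, hvs⟩
      exact (Finset.card_le_card hsub2).trans (Finset.card_union_le _ _)
    have hinj : (G.filter (fun v => IsSquare (A * v + u0))).card
        ≤ (Finset.univ.filter (fun z : F => IsSquare z)).card := by
      refine Finset.card_le_card_of_injOn (fun v => A * v + u0) ?_ ?_
      · intro v hv
        rw [Finset.mem_coe, Finset.mem_filter] at hv ⊢
        exact ⟨Finset.mem_univ _, hv.2⟩
      · intro v1 _ v2 _ hv
        exact mul_left_cancel₀ hA0 (add_right_cancel hv)
    linarith [hsplit, hinj]
  -- nonsquare points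
  set NSx := Finset.univ.filter
    (fun x : F => ¬ IsSquare (a * x ^ (r + 1) + d * x ^ r + b * x + c)) with hNSx
  have hVNS : Vbad.card ≤ NSx.card := by
    refine Finset.card_le_card_of_surjOn g ?_
    intro v hv
    rw [hVbad] at hv
    rw [Finset.mem_coe, Finset.mem_filter] at hv
    obtain ⟨hvG, hvns⟩ := hv
    rw [hG, Finset.mem_image] at hvG
    obtain ⟨x, -, hx⟩ := hvG
    refine ⟨x, ?_, hx⟩
    rw [Finset.mem_coe, hNSx, Finset.mem_filter]
    refine ⟨Finset.mem_univ _, ?_⟩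
    rw [← hginv x, hx]
    exact hvns
  have hDdisj : Disjoint D NSx := by
    rw [Finset.disjoint_left]
    intro x hxD hxN
    rw [hNSx, Finset.mem_filter] at hxN
    exact hxN.2 (hsq x hxD)
  have hDN : D.card + NSx.card ≤ Fintype.card F := by
    rw [← Finset.card_union_of_disjoint hDdisj]
    exact Finset.card_le_univ _
  -- final contradiction
  have hfinal : 2 * D.card + r ≤ 2 * Fintype.card F + 1 := by
    linarith [hGcard, hVcard, hSQ, hVNS, hDN]
  have hcast : (2 * D.card + r : ℝ) ≤ 2 * (Fintype.card F : ℝ) + 1 := by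
    exact_mod_cast hfinal
  push_cast at hcast
  linarith
end

section
/- Let t ≤ k < q and let U be a set of polynomials over F_q of degree at most k. If for any two f, g ∈ U there exist t distinct elements x_1, …, x_t ∈ F_q such that f(x_i) = g(x_i) for i = 1, …, t, then |U| ≤ q^{k+1−t}. -/
open Polynomial

/-- Let `t ≤ k < q` and let `U` be a set of polynomials over `F_q` of degree at most `k`.
If for any two `f, g ∈ U` there exist `t` distinct elements of `F_q` on which `f` and `g`
agree, then `|U| ≤ q^{k+1−t}`. -/
theorem stmt3 (F : Type*) [Field F] [Fintype F] (t k : ℕ)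
    (htk : t ≤ k) (hkq : k < Fintype.card F)
    (U : Finset (Polynomial F)) (hdeg : ∀ f ∈ U, f.natDegree ≤ k)
    (hint : ∀ f ∈ U, ∀ g ∈ U,
      ∃ s : Finset F, s.card = t ∧ ∀ x ∈ s, f.eval x = g.eval x) :
    U.card ≤ Fintype.card F ^ (k + 1 - t) := by
  classical
  have key : U.card ≤ (Finset.univ : Finset (Fin (k + 1 - t) → F)).card := by
    apply Finset.card_le_card_of_injOn
      (fun f : Polynomial F => (fun i : Fin (k + 1 - t) => f.coeff (t + i)))
      (fun _ _ => Finset.mem_univ _)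
    intro f hf g hg h
    by_contra hne
    set d := f - g with hd
    have hdne : d ≠ 0 := sub_ne_zero.mpr hne
    have hcoeff : ∀ j, t ≤ j → d.coeff j = 0 := by
      intro j hj
      by_cases hjk : j ≤ k
      · have hlt : j - t < k + 1 - t := by omega
        have := congrFun h ⟨j - t, hlt⟩
        simp only at this
        have hjt : t + (j - t) = j := by omega
        rw [hjt] at this
        simp [hd, Polynomial.coeff_sub, this]
      · have hdk : d.natDegree ≤ k := by
          refine le_trans (Polynomial.natDegree_sub_le f g) ?_
          exact max_le (hdeg f hf) (hdeg g hg)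
        exact Polynomial.coeff_eq_zero_of_natDegree_lt (by omega)
    have hdeglt : d.natDegree < t := by
      by_contra hge
      push_neg at hge
      exact Polynomial.leadingCoeff_ne_zero.mpr hdne (hcoeff _ hge)
    obtain ⟨s, hs, heval⟩ := hint f hf g hg
    have hsub : s ⊆ d.roots.toFinset := by
      intro x hx
      rw [Multiset.mem_toFinset, Polynomial.mem_roots hdne]
      simp [hd, Polynomial.IsRoot, heval x hx]
    have : s.card ≤ d.natDegree := by
      calc s.card ≤ d.roots.toFinset.card := Finset.card_le_card hsub
        _ ≤ Multiset.card d.roots := Multiset.toFinset_card_le _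
        _ ≤ d.natDegree := Polynomial.card_roots' d
    omega
  calc U.card ≤ (Finset.univ : Finset (Fin (k + 1 - t) → F)).card := key
    _ = Fintype.card F ^ (k + 1 - t) := by
        simp [Finset.card_univ, Fintype.card_fun]
end

section
/- Let U be an intersecting family of polynomials over F_q of degree at most 2. Suppose there are more than ⌊(q+1)/2⌋ polynomials h_1, h_2, … in U whose coefficient of x^2 equals a fixed c ∈ F_q, and suppose there exist α, β ∈ F_q such that h_i(α) = β for all these polynomials. Then every polynomial f ∈ U whose coefficient of x^2 is not c satisfies f(α) = β. -/
open Polynomial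

private lemma eval_deg2 {F : Type*} [Field F] (p : Polynomial F) (hp : p.natDegree ≤ 2) (z : F) :
    p.eval z = p.coeff 2 * z^2 + p.coeff 1 * z + p.coeff 0 := by
  rw [Polynomial.eval_eq_sum_range' (lt_of_le_of_lt hp (by norm_num : (2:ℕ) < 3))]
  simp [Finset.sum_range_succ]
  ring

/-- Let `U` be an intersecting family of polynomials over `F_q` of degree at most `2`.
If more than `⌊(q+1)/2⌋` polynomials in `U` have coefficient of `x^2` equal to a fixed `c`
and all of them pass through the point `(α, β)`, then every `f ∈ U` whose coefficient of
`x^2` is not `c` satisfies `f(α) = β`. -/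
theorem stmt6 (F : Type*) [Field F] [Fintype F]
    (U : Finset (Polynomial F)) (hdeg : ∀ f ∈ U, f.natDegree ≤ 2)
    (hint : ∀ f ∈ U, ∀ g ∈ U, ∃ x : F, f.eval x = g.eval x)
    (c : F) (H : Finset (Polynomial F)) (hHU : H ⊆ U)
    (hHc : ∀ h ∈ H, h.coeff 2 = c)
    (hH : (Fintype.card F + 1) / 2 < H.card)
    (α β : F) (hαβ : ∀ h ∈ H, h.eval α = β) :
    ∀ f ∈ U, f.coeff 2 ≠ c → f.eval α = β := by
  intro f hfU hfc
  by_contra hne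
  classical
  set q := Fintype.card F with hq
  have hd : f.coeff 2 - c ≠ 0 := sub_ne_zero.mpr hfc
  set d := f.coeff 2 - c with hddef
  set e := f.eval α - β with hedef
  have he : e ≠ 0 := sub_ne_zero.mpr hne
  set m := e / d with hmdef
  have hm : m ≠ 0 := div_ne_zero he hd
  -- choose roots
  have hroot : ∀ h ∈ H, ∃ x : F, f.eval x = h.eval x := fun h hh => hint f hfU h (hHU hh)
  choose! r hr using hroot
  have hrα : ∀ h ∈ H, r h ≠ α := by
    intro h hh hxα
    have := hr h hh
    rw [hxα, hαβ h hh] at this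
    exact hne this
  -- injectivity: two polys in H agreeing with f at a common point ≠ α are equal
  have hinj : ∀ h₁ ∈ H, ∀ h₂ ∈ H, ∀ x : F, x ≠ α →
      f.eval x = h₁.eval x → f.eval x = h₂.eval x → h₁ = h₂ := by
    intro h₁ hh₁ h₂ hh₂ x hxα e1 e2
    have hd₁ : h₁.natDegree ≤ 2 := hdeg h₁ (hHU hh₁)
    have hd₂ : h₂.natDegree ≤ 2 := hdeg h₂ (hHU hh₂)
    have ex1 : h₁.eval x = h₂.eval x := e1 ▸ e2
    have exα : h₁.eval α = h₂.eval α := by rw [hαβ h₁ hh₁, hαβ h₂ hh₂]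
    rw [eval_deg2 h₁ hd₁, eval_deg2 h₂ hd₂, hHc h₁ hh₁, hHc h₂ hh₂] at ex1 exα
    have hc1 : h₁.coeff 1 = h₂.coeff 1 := by
      have key : (h₁.coeff 1 - h₂.coeff 1) * (x - α) = 0 := by linear_combination ex1 - exα
      rcases mul_eq_zero.mp key with hzz | hzz
      · exact sub_eq_zero.mp hzz
      · exact absurd (sub_eq_zero.mp hzz) hxα
    have hc0 : h₁.coeff 0 = h₂.coeff 0 := by linear_combination exα - α * hc1
    ext n
    match n with
    | 0 => exact hc0
    | 1 => exact hc1
    | 2 => rw [hHc h₁ hh₁, hHc h₂ hh₂]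
    | (n+3) =>
      rw [Polynomial.coeff_eq_zero_of_natDegree_lt (lt_of_le_of_lt hd₁ (by omega)),
        Polynomial.coeff_eq_zero_of_natDegree_lt (lt_of_le_of_lt hd₂ (by omega))]
  -- the involution sending a root of f - h to the other root
  set σ : F → F := fun x => α - m / (α - x) with hσdef
  have hσα : ∀ x : F, x ≠ α → σ x ≠ α := by
    intro x hxα hcon
    have htne : α - x ≠ 0 := sub_ne_zero.mpr (Ne.symm hxα)
    have h0 : m / (α - x) = 0 := by
      simp only [hσdef] at hcon
      linear_combination -hcon
    rcases div_eq_zero_iff.mp h0 with hz | hz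
    · exact hm hz
    · exact htne hz
  have hσroot : ∀ h ∈ H, ∀ x : F, x ≠ α → f.eval x = h.eval x →
      f.eval (σ x) = h.eval (σ x) := by
    intro h hh x hxα hx
    have hdf : f.natDegree ≤ 2 := hdeg f hfU
    have hdh : h.natDegree ≤ 2 := hdeg h (hHU hh)
    have hev : ∀ z : F, f.eval z - h.eval z =
        d * z^2 + (f.coeff 1 - h.coeff 1) * z + (f.coeff 0 - h.coeff 0) := by
      intro z
      rw [eval_deg2 f hdf, eval_deg2 h hdh, hHc h hh, hddef]; ring
    set B := f.coeff 1 - h.coeff 1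
    set C0 := f.coeff 0 - h.coeff 0
    have h1 : d * x^2 + B * x + C0 = 0 := by rw [← hev x]; rw [hx]; ring
    have h2 : d * α^2 + B * α + C0 = e := by rw [← hev α, hedef, hαβ h hh]
    have htne : α - x ≠ 0 := sub_ne_zero.mpr (Ne.symm hxα)
    have hu : (m / (α - x)) * (d * (α - x)) = e := by rw [hmdef]; field_simp
    have key : (α - x) * (d * (σ x)^2 + B * (σ x) + C0) = 0 := by
      simp only [hσdef]
      linear_combination ((α - x) - ((α - m / (α - x)) - x)) * h1 +
        ((α - m / (α - x)) - x) * h2 - ((α - m / (α - x)) - x) * hu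
    rcases mul_eq_zero.mp key with hz | hz
    · exact absurd hz htne
    · have := hev (σ x)
      rw [hz] at this
      exact sub_eq_zero.mp this
  have hσinj : ∀ x y : F, x ≠ α → y ≠ α → σ x = σ y → x = y := by
    intro x y hx hy hxy
    have htx : α - x ≠ 0 := sub_ne_zero.mpr (Ne.symm hx)
    have hty : α - y ≠ 0 := sub_ne_zero.mpr (Ne.symm hy)
    simp only [hσdef, sub_right_inj] at hxy
    field_simp at hxy
    replace hxy : y = x ∨ m = 0 := Or.inl (by linear_combination -hxy)
    rcases hxy with hz | hz
    · exact hz.symm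
    · exact absurd hz hm
  -- counting
  set T := H.image r with hTdef
  have hT : ∀ x ∈ T, x ≠ α := by
    intro x hx; obtain ⟨h, hh, rfl⟩ := Finset.mem_image.mp hx; exact hrα h hh
  have hTcard : T.card = H.card := Finset.card_image_of_injOn (by
    intro h₁ hh₁ h₂ hh₂ hrr
    exact hinj h₁ hh₁ h₂ hh₂ (r h₁) (hrα h₁ hh₁) (hr h₁ hh₁) (by rw [hrr]; exact hr h₂ hh₂))
  set T' := T.image σ with hT'def
  have hT' : ∀ x ∈ T', x ≠ α := by
    intro x hx; obtain ⟨y, hy, rfl⟩ := Finset.mem_image.mp hx; exact hσα y (hT y hy)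
  have hT'card : T'.card = T.card := Finset.card_image_of_injOn
    (fun x hx y hy => hσinj x y (hT x hx) (hT y hy))
  have hinterfix : ∀ y ∈ T ∩ T', (α - y)^2 = m := by
    intro y hy
    obtain ⟨hyT, hyT'⟩ := Finset.mem_inter.mp hy
    obtain ⟨x, hxT, hxy⟩ := Finset.mem_image.mp hyT'
    obtain ⟨h₂, hh₂, rfl⟩ := Finset.mem_image.mp hyT
    obtain ⟨h₁, hh₁, rfl⟩ := Finset.mem_image.mp hxT
    -- hxy : σ (r h₁) = r h₂
    have hroot1 : f.eval (σ (r h₁)) = h₁.eval (σ (r h₁)) :=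
      hσroot h₁ hh₁ (r h₁) (hrα h₁ hh₁) (hr h₁ hh₁)
    rw [hxy] at hroot1
    have heq : h₁ = h₂ := hinj h₁ hh₁ h₂ hh₂ (r h₂) (hrα h₂ hh₂) hroot1 (hr h₂ hh₂)
    rw [heq] at hxy
    -- hxy : σ (r h₂) = r h₂
    have hty : α - r h₂ ≠ 0 := sub_ne_zero.mpr (Ne.symm (hrα h₂ hh₂))
    simp only [hσdef] at hxy
    field_simp at hxy
    linear_combination hxy
  have hintercard : (T ∩ T').card ≤ 2 := by
    by_contra hgt
    push_neg at hgt
    obtain ⟨a, b, cc, ha, hb, hcc, hab, hac, hbc⟩ := Finset.two_lt_card_iff.mp hgt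
    have ea := hinterfix a ha
    have eb := hinterfix b hb
    have ec := hinterfix cc hcc
    have hb' : (b - a) * (2*α - a - b) = 0 := by linear_combination ea - eb
    have hc' : (cc - a) * (2*α - a - cc) = 0 := by linear_combination ea - ec
    have hbe : 2*α - a - b = 0 := by
      rcases mul_eq_zero.mp hb' with hz | hz
      · exact absurd (sub_eq_zero.mp hz).symm hab
      · exact hz
    have hce : 2*α - a - cc = 0 := by
      rcases mul_eq_zero.mp hc' with hz | hz
      · exact absurd (sub_eq_zero.mp hz).symm hac
      · exact hz
    exact hbc (by linear_combination hce - hbe)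
  have hα1 : (T ∪ T') ⊆ Finset.univ.erase α := by
    intro x hx
    rcases Finset.mem_union.mp hx with h | h
    · exact Finset.mem_erase.mpr ⟨hT x h, Finset.mem_univ x⟩
    · exact Finset.mem_erase.mpr ⟨hT' x h, Finset.mem_univ x⟩
  have hucard : (T ∪ T').card ≤ q - 1 := by
    calc (T ∪ T').card ≤ (Finset.univ.erase α).card := Finset.card_le_card hα1
      _ = q - 1 := by rw [Finset.card_erase_of_mem (Finset.mem_univ α), Finset.card_univ]
  have hqpos : 1 ≤ q := Fintype.card_pos
  have hsum : H.card * 2 ≤ q + 1 := by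
    have := Finset.card_union_add_card_inter T T'
    omega
  have hfin : H.card ≤ (q + 1) / 2 := (Nat.le_div_iff_mul_le (by norm_num)).mpr hsum
  omega
end

section
/- Let q be even and let U be an intersecting family of polynomials over F_q of degree at most 2 with |U| > (q^2 + q)/2. Suppose H ⊆ U has more than q^2/2 elements and there exist α, β ∈ F_q such that h(α) = β for every h ∈ H. Then f(α) = β for every polynomial f ∈ U. -/
open Polynomial Finset

set_option linter.unusedSectionVars false
set_option maxHeartbeats 1000000

namespace Stmt7Proof

variable {F : Type*} [Field F] [Fintype F] [DecidableEq F] [CharP F 2]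

lemma sq_inj {a b : F} (h : a ^ 2 = b ^ 2) : a = b := by
  have h2 : (a + b) ^ 2 = 0 := by rw [CharTwo.add_sq, h, CharTwo.add_self_eq_zero]
  have h3 : a + b = 0 := sq_eq_zero_iff.mp h2
  rwa [add_eq_zero_iff_eq_neg, CharTwo.neg_eq] at h3

lemma sq_surj (y : F) : ∃ x : F, x ^ 2 = y :=
  Finite.surjective_of_injective (fun _ _ h => sq_inj h) y

abbrev HasRoot (u v c : F) : Prop := ∃ x : F, u * x ^ 2 + v * x + c = 0

def psi (c w t : F) : F := c * t ^ 2 + w * t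

def Img (c w : F) : Finset F := univ.image (psi c w)

lemma psi_add (c w s t : F) : psi c w (s + t) = psi c w s + psi c w t := by
  simp only [psi, CharTwo.add_sq]; ring

lemma add_mem_Img {c w x y : F} (hx : x ∈ Img c w) (hy : y ∈ Img c w) :
    x + y ∈ Img c w := by
  simp only [Img, mem_image, mem_univ, true_and] at *
  obtain ⟨s, rfl⟩ := hx; obtain ⟨t, rfl⟩ := hy
  exact ⟨s + t, psi_add c w s t⟩

lemma psi_eq_iff {c w : F} (hc : c ≠ 0) (s t : F) :
    psi c w s = psi c w t ↔ s = t ∨ s = t + w * c⁻¹ := by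
  have h2 : (2:F) = 0 := CharTwo.two_eq_zero
  constructor
  · intro h
    have h0 : psi c w (s + t) = 0 := by
      rw [psi_add, h, CharTwo.add_self_eq_zero]
    have hmul : (s + t) * (c * (s + t) + w) = 0 := by
      simp only [psi] at h0; linear_combination h0
    rcases mul_eq_zero.mp hmul with h1 | h1
    · left; rwa [add_eq_zero_iff_eq_neg, CharTwo.neg_eq] at h1
    · right
      have hst : s + t = w * c⁻¹ := by
        field_simp
        linear_combination h1 - w * h2
      linear_combination hst - t * h2
  · rintro (rfl | rfl)
    · rfl
    · have hr : psi c w (w * c⁻¹) = 0 := by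
        have hcc : c * (w * c⁻¹) = w := by field_simp
        simp only [psi]
        linear_combination (w * c⁻¹) * hcc + (w * (w * c⁻¹)) * h2
      rw [add_comm, psi_add, hr, zero_add]

lemma card_Img {c w : F} (hc : c ≠ 0) (hw : w ≠ 0) :
    2 * (Img c w).card = Fintype.card F := by
  have key : (univ : Finset F).card = ∑ b ∈ Img c w, 2 := by
    rw [Finset.card_eq_sum_card_fiberwise (f := psi c w) (t := Img c w)
      (fun x _ => mem_image_of_mem _ (mem_univ x))]
    refine Finset.sum_congr rfl fun b hb => ?_
    simp only [Img, mem_image, mem_univ, true_and] at hb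
    obtain ⟨t, rfl⟩ := hb
    have : (univ.filter fun s => psi c w s = psi c w t) = {t, t + w * c⁻¹} := by
      ext s
      simp only [mem_filter, mem_univ, true_and, mem_insert, mem_singleton,
        psi_eq_iff hc]
    rw [this, card_insert_of_notMem, card_singleton]
    simp only [mem_singleton, left_eq_add]
    exact fun h => hw (by field_simp at h; simpa using h)
  rw [sum_const, smul_eq_mul, Finset.card_univ] at key
  omega

lemma hasRoot_mem_Img {u c w : F} (hc : c ≠ 0) (h : HasRoot u w c) :
    u ∈ Img c w := by
  obtain ⟨x, hx⟩ := h
  have hx0 : x ≠ 0 := by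
    rintro rfl; simp at hx; exact hc hx
  simp only [Img, mem_image, mem_univ, true_and, psi]
  refine ⟨x⁻¹, ?_⟩
  have h2 : (2:F) = 0 := CharTwo.two_eq_zero
  have hxi : x * x⁻¹ = 1 := mul_inv_cancel₀ hx0
  linear_combination x⁻¹ ^ 2 * hx - (u * (x * x⁻¹ + 1) + w * x⁻¹) * hxi - u * h2

lemma card_filter_prod (P : F × F → Prop) [DecidablePred P] :
    ((univ : Finset (F × F)).filter P).card
      = ∑ v : F, ((univ : Finset F).filter fun u => P (u, v)).card := by
  rw [Finset.card_eq_sum_card_fiberwise (f := Prod.snd) (t := (univ : Finset F))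
    (fun x _ => mem_univ _)]
  refine Finset.sum_congr rfl fun v _ => ?_
  apply Finset.card_bij (fun p _ => p.1)
  · rintro ⟨u, v'⟩ hp
    simp only [mem_filter, mem_univ, true_and] at hp ⊢
    obtain ⟨hP, rfl⟩ := hp
    exact hP
  · rintro ⟨u, v1⟩ h1 ⟨u', v2⟩ h2 h
    simp only [mem_filter] at h1 h2
    simp only at h
    rw [Prod.ext_iff]
    exact ⟨h, h1.2.trans h2.2.symm⟩
  · intro u hu
    simp only [mem_filter, mem_univ, true_and] at hu
    exact ⟨(u, v), by simp [hu], rfl⟩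

lemma row_card_le {c w : F} (hc : c ≠ 0) (hw : w ≠ 0) (a : F) (s : Finset F)
    (hs : ∀ u ∈ s, HasRoot (u + a) w c) : 2 * s.card ≤ Fintype.card F := by
  have hsub : s.card ≤ (Img c w).card := by
    apply Finset.card_le_card_of_injOn (fun u => u + a)
    · intro u hu; exact hasRoot_mem_Img hc (hs u hu)
    · intro x _ y _ h; exact add_right_cancel h
  have := card_Img hc hw
  omega

lemma card_RS {c : F} (hc : c ≠ 0) :
    2 * ((univ : Finset (F×F)).filter fun p => HasRoot p.1 p.2 c).card + 2
      ≤ Fintype.card F ^ 2 + Fintype.card F := by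
  set n := Fintype.card F with hn
  rw [card_filter_prod, Finset.mul_sum, ← Finset.sum_erase_add _ _ (mem_univ (0:F))]
  set k := ((univ : Finset F).erase 0).card with hkdef
  have hk : k + 1 = n := by
    rw [hkdef, card_erase_of_mem (mem_univ _), card_univ]
    have : 0 < n := Fintype.card_pos
    omega
  have hS : ∑ v ∈ (univ : Finset F).erase 0,
      2 * ((univ : Finset F).filter fun u => HasRoot u v c).card ≤ k * n := by
    have := Finset.sum_le_card_nsmul ((univ : Finset F).erase 0)
      (fun v => 2 * ((univ : Finset F).filter fun u => HasRoot u v c).card) n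
      (fun v hv => row_card_le hc (mem_erase.mp hv).1 0
        _ (fun u hu => by simpa using (mem_filter.mp hu).2))
    rwa [smul_eq_mul] at this
  have h0 : ((univ : Finset F).filter fun u => HasRoot u (0:F) c).card ≤ k := by
    apply card_le_card
    intro u hu
    simp only [mem_filter, mem_univ, true_and] at hu
    refine mem_erase.mpr ⟨?_, mem_univ _⟩
    rintro rfl; obtain ⟨x, hx⟩ := hu; simp at hx; exact hc hx
  nlinarith [hS, h0, hk]

lemma card_good {c δ : F} (hc : c ≠ 0) (hδ : δ ≠ 0) :
    2 * ((univ : Finset F).filter fun w => w ≠ 0 ∧ δ ∈ Img c w).card + 2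
      ≤ Fintype.card F := by
  have h2 : (2:F) = 0 := CharTwo.two_eq_zero
  obtain ⟨ts, hts⟩ := sq_surj (δ * c⁻¹)
  have hts0 : ts ≠ 0 := by
    rintro rfl
    rw [pow_two, mul_zero] at hts
    rcases mul_eq_zero.mp hts.symm with h | h
    · exact hδ h
    · exact hc (inv_eq_zero.mp h)
  have hcts : c * ts ^ 2 = δ := by rw [hts]; field_simp
  set D : Finset F := univ \ {0, ts} with hDdef
  set σ : F → F := fun t => δ * t⁻¹ + c * t with hσdef
  have hmemD : ∀ t : F, t ∈ D ↔ t ≠ 0 ∧ t ≠ ts := by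
    intro t; simp [hDdef, not_or]
  have hWsub : ((univ : Finset F).filter fun w => w ≠ 0 ∧ δ ∈ Img c w)
      ⊆ D.image σ := by
    intro w hw
    simp only [mem_filter, mem_univ, true_and] at hw
    obtain ⟨hw0, hmem⟩ := hw
    simp only [Img, mem_image, mem_univ, true_and, psi] at hmem
    obtain ⟨t, ht⟩ := hmem
    have ht0 : t ≠ 0 := by
      rintro rfl; simp at ht; exact hδ ht.symm
    have hets : t ≠ ts := by
      rintro rfl
      have : w * t = 0 := by linear_combination ht - hcts
      rcases mul_eq_zero.mp this with h | h
      · exact hw0 h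
      · exact ht0 h
    refine mem_image.mpr ⟨t, (hmemD t).mpr ⟨ht0, hets⟩, ?_⟩
    simp only [hσdef]
    field_simp
    linear_combination ht + (δ - t*w)*h2
  have himg : 2 * (D.image σ).card ≤ D.card := by
    rw [Finset.card_eq_sum_card_fiberwise (f := σ) (t := D.image σ)
      (fun x hx => mem_image_of_mem _ hx)]
    have : ∀ b ∈ D.image σ, 2 ≤ (D.filter fun t => σ t = b).card := by
      intro b hb
      obtain ⟨t, htD, rfl⟩ := mem_image.mp hb
      obtain ⟨ht0, hts'⟩ := (hmemD t).mp htD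
      set t' : F := δ * (c * t)⁻¹ with ht'def
      have ht'0 : t' ≠ 0 := by
        simp only [ht'def]
        exact mul_ne_zero hδ (inv_ne_zero (mul_ne_zero hc ht0))
      have hct : c * t ≠ 0 := mul_ne_zero hc ht0
      have ht'ts : t' ≠ ts := by
        intro h
        have hδeq : δ = ts * (c * t) := by
          rw [← h, ht'def]; field_simp
        have : c * ts * (ts - t) = 0 := by linear_combination hcts - hδeq + (δ - c*ts*t)*h2
        rcases mul_eq_zero.mp this with h' | h'
        · exact (mul_ne_zero hc hts0) h'
        · exact hts' (sub_eq_zero.mp h').symm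
      have ht't : t' ≠ t := by
        intro h
        have hδeq : δ = c * t ^ 2 := by
          rw [ht'def] at h
          field_simp at h
          linear_combination h
        have : t ^ 2 = ts ^ 2 := by
          have hcc : c * t ^ 2 = c * ts ^ 2 := by rw [hcts, ← hδeq]
          exact mul_left_cancel₀ hc hcc
        exact hts' (sq_inj this)
      have hσt' : σ t' = σ t := by
        simp only [hσdef, ht'def]
        field_simp
        ring
      have hsub2 : ({t, t'} : Finset F) ⊆ D.filter fun s => σ s = σ t := by
        intro s hs
        rcases mem_insert.mp hs with rfl | hs
        · exact mem_filter.mpr ⟨htD, rfl⟩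
        · rw [mem_singleton.mp hs]
          exact mem_filter.mpr ⟨(hmemD t').mpr ⟨ht'0, ht'ts⟩, hσt'⟩
      calc 2 = ({t, t'} : Finset F).card := by
                rw [card_insert_of_notMem (by simpa using ht't.symm), card_singleton]
        _ ≤ _ := card_le_card hsub2
    calc 2 * (D.image σ).card = (D.image σ).card • 2 := by rw [smul_eq_mul, mul_comm]
      _ ≤ _ := Finset.card_nsmul_le_sum _ _ _ this
  have hD : D.card + 2 = Fintype.card F := by
    rw [hDdef, card_sdiff_of_subset (subset_univ _), card_univ]
    have hcard2 : ({0, ts} : Finset F).card = 2 := by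
      rw [card_insert_of_notMem (by simpa using hts0.symm), card_singleton]
    rw [hcard2]
    have : ({0, ts} : Finset F).card ≤ Fintype.card F := by
      rw [← card_univ]; exact card_le_card (subset_univ _)
    omega
  have := card_le_card hWsub
  omega

lemma pair_bound {a e c a' e' c' : F} (hc : c ≠ 0) (hc' : c' ≠ 0)
    (hne : ¬(a = a' ∧ e = e' ∧ c = c'))
    (hmeet : ∃ x : F, a * x ^ 2 + e * x + c = a' * x ^ 2 + e' * x + c') :
    2 * ((univ : Finset (F × F)).filter fun p =>
        HasRoot (p.1 + a) (p.2 + e) c ∧ HasRoot (p.1 + a') (p.2 + e') c').card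
      ≤ Fintype.card F ^ 2 := by
  have h2 : (2:F) = 0 := CharTwo.two_eq_zero
  set n := Fintype.card F with hn
  rw [card_filter_prod]
  simp only []
  by_cases hee : e = e'
  · -- hard case
    subst hee
    have haa : a ≠ a' := by
      intro h
      subst h
      obtain ⟨x, hx⟩ := hmeet
      have : c = c' := by linear_combination hx
      exact hne ⟨rfl, rfl, this⟩
    set δ := a + a' with hδdef
    have hδ : δ ≠ 0 := by
      rw [hδdef]
      intro h
      rw [add_eq_zero_iff_eq_neg, CharTwo.neg_eq] at h
      exact haa h
    -- row at v = e
    have hrowe : ((univ : Finset F).filter fun u =>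
        HasRoot (u + a) (e + e) c ∧ HasRoot (u + a') (e + e) c').card + 2 ≤ n := by
      have hsub : ((univ : Finset F).filter fun u =>
          HasRoot (u + a) (e + e) c ∧ HasRoot (u + a') (e + e) c')
          ⊆ univ \ {a, a'} := by
        intro u hu
        obtain ⟨-, h1, h1'⟩ := mem_filter.mp hu
        rw [CharTwo.add_self_eq_zero] at h1 h1'
        simp only [mem_sdiff, mem_univ, true_and, mem_insert, mem_singleton, not_or]
        constructor
        · intro h; subst h
          rw [CharTwo.add_self_eq_zero] at h1
          obtain ⟨x, hx⟩ := h1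
          exact hc (by linear_combination hx)
        · intro h; subst h
          rw [CharTwo.add_self_eq_zero] at h1'
          obtain ⟨x, hx⟩ := h1'
          exact hc' (by linear_combination hx)
      have hDcard : (univ \ ({a, a'} : Finset F)).card + 2 = n := by
        rw [card_sdiff_of_subset (subset_univ _), card_univ]
        have hpair : ({a, a'} : Finset F).card = 2 := by
          rw [card_insert_of_notMem (by simpa using haa), card_singleton]
        have : ({a, a'} : Finset F).card ≤ n := by
          rw [hn, ← card_univ]; exact card_le_card (subset_univ _)
        omega
      have := card_le_card hsub
      omega
    -- rows v ≠ e
    have hrowgood : ∀ v : F, v ≠ e → δ ∈ Img c (v + e) →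
        2 * ((univ : Finset F).filter fun u =>
          HasRoot (u + a) (v + e) c ∧ HasRoot (u + a') (v + e) c').card ≤ n := by
      intro v hv hg
      have hw : v + e ≠ 0 := by
        intro h; rw [add_eq_zero_iff_eq_neg, CharTwo.neg_eq] at h; exact hv h
      exact row_card_le hc hw a _ (fun u hu => ((mem_filter.mp hu).2).1)
    have hrowbad : ∀ v : F, v ≠ e → δ ∉ Img c (v + e) →
        4 * ((univ : Finset F).filter fun u =>
          HasRoot (u + a) (v + e) c ∧ HasRoot (u + a') (v + e) c').card ≤ n := by
      intro v hv hg
      have hw : v + e ≠ 0 := by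
        intro h; rw [add_eq_zero_iff_eq_neg, CharTwo.neg_eq] at h; exact hv h
      set row := (univ : Finset F).filter fun u =>
          HasRoot (u + a) (v + e) c ∧ HasRoot (u + a') (v + e) c' with hrowdef
      rcases row.eq_empty_or_nonempty with hre | ⟨u₀, hu₀⟩
      · rw [hre]; simp
      · obtain ⟨-, hr1, hr2⟩ := mem_filter.mp hu₀
        have hm1 : u₀ + a ∈ Img c (v + e) := hasRoot_mem_Img hc hr1
        have hm2 : u₀ + a' ∈ Img c' (v + e) := hasRoot_mem_Img hc' hr2
        have hI12 : Img c (v + e) ≠ Img c' (v + e) := by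
          intro hIeq
          apply hg
          have : δ = (u₀ + a) + (u₀ + a') := by linear_combination (-u₀) * h2
          rw [this]
          exact add_mem_Img hm1 (hIeq ▸ hm2)
        -- z in I2 not in I1
        have hz : ∃ z ∈ Img c' (v + e), z ∉ Img c (v + e) := by
          by_contra hcon
          push_neg at hcon
          apply hI12
          have hsub : Img c' (v + e) ⊆ Img c (v + e) := fun z hz => hcon z hz
          have hcards : (Img c (v + e)).card ≤ (Img c' (v + e)).card := by
            have e1 := card_Img hc hw
            have e2 := card_Img hc' hw
            omega
          exact (Finset.eq_of_subset_of_card_le hsub hcards).symm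
        obtain ⟨z, hz2, hz1⟩ := hz
        -- injection of row into K
        set K := Img c (v + e) ∩ Img c' (v + e) with hKdef
        have hrK : row.card ≤ K.card := by
          apply Finset.card_le_card_of_injOn (fun u => u + u₀)
          · intro u hu
            obtain ⟨-, hu1, hu2⟩ := mem_filter.mp hu
            have e1 : u + u₀ = (u + a) + (u₀ + a) := by linear_combination (-a) * h2
            have e2 : u + u₀ = (u + a') + (u₀ + a') := by linear_combination (-a') * h2
            simp only [hKdef, Finset.mem_coe, mem_inter]
            constructor
            · rw [e1]; exact add_mem_Img (hasRoot_mem_Img hc hu1) hm1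
            · rw [e2]; exact add_mem_Img (hasRoot_mem_Img hc' hu2) hm2
          · intro x _ y _ h; exact add_right_cancel h
        -- 2 * K.card ≤ |I2|
        have hK2 : 2 * K.card ≤ (Img c' (v + e)).card := by
          have hdisj : Disjoint K (K.image fun k => k + z) := by
            rw [Finset.disjoint_left]
            intro x hxK hxim
            obtain ⟨k, hkK, hkz⟩ := mem_image.mp hxim
            apply hz1
            have : z = x + k := by linear_combination hkz - k * h2
            rw [this]
            exact add_mem_Img (mem_inter.mp hxK).1 (mem_inter.mp hkK).1
          have hsubU : K ∪ K.image (fun k => k + z) ⊆ Img c' (v + e) := by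
            intro x hx
            rcases mem_union.mp hx with hx | hx
            · exact (mem_inter.mp hx).2
            · obtain ⟨k, hkK, rfl⟩ := mem_image.mp hx
              exact add_mem_Img (mem_inter.mp hkK).2 hz2
          have himcard : (K.image fun k => k + z).card = K.card :=
            Finset.card_image_of_injective _ (fun x y h => add_right_cancel h)
          have := card_le_card hsubU
          rw [Finset.card_union_of_disjoint hdisj, himcard] at this
          omega
        have hI2card := card_Img hc' hw
        omega
    -- number of good rows
    have hgood : 2 * (((univ : Finset F).erase e).filter
        fun v => δ ∈ Img c (v + e)).card + 2 ≤ n := by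
      have hinj : (((univ : Finset F).erase e).filter fun v => δ ∈ Img c (v + e)).card
          ≤ ((univ : Finset F).filter fun w => w ≠ 0 ∧ δ ∈ Img c w).card := by
        apply Finset.card_le_card_of_injOn (fun v => v + e)
        · intro v hv
          obtain ⟨hv1, hv2⟩ := mem_filter.mp hv
          have hve : v ≠ e := (mem_erase.mp hv1).1
          refine mem_filter.mpr ⟨mem_univ _, ?_, hv2⟩
          intro h; rw [add_eq_zero_iff_eq_neg, CharTwo.neg_eq] at h; exact hve h
        · intro x _ y _ h; exact add_right_cancel h
      have := card_good hc hδ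
      omega
    -- assemble
    have hsplit : ∑ v : F, 4 * ((univ : Finset F).filter fun u =>
          HasRoot (u + a) (v + e) c ∧ HasRoot (u + a') (v + e) c').card
        ≤ 4 * ((univ : Finset F).filter fun u =>
          HasRoot (u + a) (e + e) c ∧ HasRoot (u + a') (e + e) c').card
          + (((univ : Finset F).erase e).card * n
            + (((univ : Finset F).erase e).filter
              fun v => δ ∈ Img c (v + e)).card * n) := by
      rw [← Finset.sum_erase_add _ _ (mem_univ e)]
      have hbound : ∀ v ∈ (univ : Finset F).erase e,
          4 * ((univ : Finset F).filter fun u =>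
            HasRoot (u + a) (v + e) c ∧ HasRoot (u + a') (v + e) c').card
          ≤ n + (if δ ∈ Img c (v + e) then n else 0) := by
        intro v hv
        have hve : v ≠ e := (mem_erase.mp hv).1
        by_cases hg : δ ∈ Img c (v + e)
        · rw [if_pos hg]
          have := hrowgood v hve hg
          omega
        · rw [if_neg hg]
          have := hrowbad v hve hg
          omega
      have hsum := Finset.sum_le_sum hbound
      rw [Finset.sum_add_distrib, Finset.sum_const,
        ← Finset.sum_filter (fun v => δ ∈ Img c (v + e)) (fun _ => n),
        Finset.sum_const, smul_eq_mul, smul_eq_mul] at hsum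
      omega
    -- final arithmetic
    have hEn : ((univ : Finset F).erase e).card + 1 = n := by
      rw [card_erase_of_mem (mem_univ _), card_univ, hn]
      have : 0 < Fintype.card F := Fintype.card_pos
      omega
    have hsum4 : ∑ v : F, 4 * ((univ : Finset F).filter fun u =>
          HasRoot (u + a) (v + e) c ∧ HasRoot (u + a') (v + e) c').card
        = 4 * ∑ v : F, ((univ : Finset F).filter fun u =>
          HasRoot (u + a) (v + e) c ∧ HasRoot (u + a') (v + e) c').card := by
      rw [Finset.mul_sum]
    set R := ∑ v : F, ((univ : Finset F).filter fun u =>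
          HasRoot (u + a) (v + e) c ∧ HasRoot (u + a') (v + e) c').card with hR
    set A := ((univ : Finset F).filter fun u =>
          HasRoot (u + a) (e + e) c ∧ HasRoot (u + a') (e + e) c').card with hA
    set g := (((univ : Finset F).erase e).filter
          fun v => δ ∈ Img c (v + e)).card with hg
    set E := ((univ : Finset F).erase e).card with hE
    rw [hsum4] at hsplit
    -- now : 4R ≤ 4A + (E*n + g*n), A + 2 ≤ n, 2g + 2 ≤ n, E + 1 = n
    have h8 : 8 * R ≤ 4 * n ^ 2 := by
      obtain ⟨m, hm⟩ : ∃ m, n = m + 2 := ⟨n - 2, by omega⟩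
      have h1 : 8 * R ≤ 8 * A + 2 * E * (m + 2) + 2 * g * (m + 2) := by
        rw [← hm]; nlinarith [hsplit]
      have h2' : 8 * A ≤ 8 * m := by omega
      have h3 : 2 * E = 2 * m + 2 := by omega
      have h4 : 2 * g ≤ m := by omega
      have h5 : 4 * n ^ 2 = 4 * (m + 2) ^ 2 := by rw [hm]
      rw [h5]
      nlinarith [h1, h2', h3, h4]
    have : 4 * (2 * R) ≤ 4 * n ^ 2 := by omega
    exact Nat.le_of_mul_le_mul_left this (by norm_num)
  · -- easy case e ≠ e'
    have hrows : ∀ v : F, 2 * ((univ : Finset F).filter fun u =>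
        HasRoot (u + a) (v + e) c ∧ HasRoot (u + a') (v + e') c').card ≤ n := by
      intro v
      by_cases hv : v + e = 0
      · have hv' : v + e' ≠ 0 := by
          intro h
          exact hee (by linear_combination hv - h)
        exact row_card_le hc' hv' a' _ (fun u hu => ((mem_filter.mp hu).2).2)
      · exact row_card_le hc hv a _ (fun u hu => ((mem_filter.mp hu).2).1)
    calc 2 * ∑ v : F, ((univ : Finset F).filter fun u =>
          HasRoot (u + a) (v + e) c ∧ HasRoot (u + a') (v + e') c').card
        = ∑ v : F, 2 * ((univ : Finset F).filter fun u =>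
          HasRoot (u + a) (v + e) c ∧ HasRoot (u + a') (v + e') c').card := by
          rw [Finset.mul_sum]
      _ ≤ ∑ _v : F, n := Finset.sum_le_sum fun v _ => hrows v
      _ = n * n := by rw [Finset.sum_const, card_univ, smul_eq_mul]
      _ = n ^ 2 := (sq n).symm

lemma key (V : Finset (F × F × F))
    (hintV : ∀ p ∈ V, ∀ p' ∈ V, ∃ x : F,
      p.1 * x ^ 2 + p.2.1 * x + p.2.2 = p'.1 * x ^ 2 + p'.2.1 * x + p'.2.2)
    (hV : Fintype.card F ^ 2 + Fintype.card F < 2 * V.card)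
    (W : Finset (F × F × F)) (hWV : W ⊆ V)
    (hW : Fintype.card F ^ 2 < 2 * W.card)
    (hW0 : ∀ p ∈ W, p.2.2 = 0) :
    ∀ p ∈ V, p.2.2 = 0 := by
  have h2 : (2:F) = 0 := CharTwo.two_eq_zero
  by_contra hcon
  push_neg at hcon
  obtain ⟨f, hfV, hf0⟩ := hcon
  set A := V.filter (fun p => p.2.2 = 0) with hA
  set B := V.filter (fun p => ¬ p.2.2 = 0) with hB
  have hAB : A.card + B.card = V.card :=
    Finset.card_filter_add_card_filter_not _
  have hAb : 2 * A.card + 2 ≤ Fintype.card F ^ 2 + Fintype.card F := by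
    have hinj : A.card ≤ ((univ : Finset (F×F)).filter fun p =>
        HasRoot p.1 p.2 f.2.2).card := by
      apply Finset.card_le_card_of_injOn (fun p => (p.1 + f.1, p.2.1 + f.2.1))
      · intro p hp
        obtain ⟨hpV, hp0⟩ := mem_filter.mp hp
        obtain ⟨x, hx⟩ := hintV p hpV f hfV
        rw [hp0] at hx
        refine mem_filter.mpr ⟨mem_univ _, x, ?_⟩
        linear_combination hx + (f.1 * x ^ 2 + f.2.1 * x + f.2.2) * h2
      · intro p hp p' hp' hpq
        obtain ⟨hpV, hp0⟩ := mem_filter.mp hp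
        obtain ⟨hpV', hp0'⟩ := mem_filter.mp hp'
        have hpq' : (p.1 + f.1, p.2.1 + f.2.1) = (p'.1 + f.1, p'.2.1 + f.2.1) := hpq
        have h1 : p.1 = p'.1 := add_right_cancel (congrArg Prod.fst hpq')
        have h21 : p.2.1 = p'.2.1 := add_right_cancel (congrArg Prod.snd hpq')
        have h22 : p.2.2 = p'.2.2 := by rw [hp0, hp0']
        exact Prod.ext h1 (Prod.ext h21 h22)
    have := card_RS (c := f.2.2) hf0
    omega
  have hBb : B.card ≤ 1 := by
    by_contra hB1
    push_neg at hB1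
    obtain ⟨b, hb, b', hb', hbb⟩ := Finset.one_lt_card.mp hB1
    obtain ⟨hbV, hb0⟩ := mem_filter.mp hb
    obtain ⟨hbV', hb0'⟩ := mem_filter.mp hb'
    have hWT : W.card ≤ ((univ : Finset (F × F)).filter fun p =>
        HasRoot (p.1 + b.1) (p.2 + b.2.1) b.2.2 ∧
        HasRoot (p.1 + b'.1) (p.2 + b'.2.1) b'.2.2).card := by
      apply Finset.card_le_card_of_injOn (fun p => (p.1, p.2.1))
      · intro p hp
        have hpV := hWV hp
        have hp0 := hW0 p hp
        obtain ⟨x, hx⟩ := hintV p hpV b hbV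
        obtain ⟨x', hx'⟩ := hintV p hpV b' hbV'
        rw [hp0] at hx hx'
        refine mem_filter.mpr ⟨mem_univ _, ⟨x, ?_⟩, ⟨x', ?_⟩⟩
        · linear_combination hx + (b.1 * x ^ 2 + b.2.1 * x + b.2.2) * h2
        · linear_combination hx' + (b'.1 * x' ^ 2 + b'.2.1 * x' + b'.2.2) * h2
      · intro p hp p' hp' hpq
        have hpq' : (p.1, p.2.1) = (p'.1, p'.2.1) := hpq
        have h1 : p.1 = p'.1 := (Prod.ext_iff.mp hpq').1
        have h21 : p.2.1 = p'.2.1 := (Prod.ext_iff.mp hpq').2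
        have h22 : p.2.2 = p'.2.2 := by rw [hW0 p hp, hW0 p' hp']
        exact Prod.ext h1 (Prod.ext h21 h22)
    have hne : ¬(b.1 = b'.1 ∧ b.2.1 = b'.2.1 ∧ b.2.2 = b'.2.2) := by
      rintro ⟨e1, e2, e3⟩
      exact hbb (Prod.ext e1 (Prod.ext e2 e3))
    have hpb := pair_bound hb0 hb0' hne (hintV b hbV b' hbV')
    linarith
  linarith [hAB, hAb, hBb, hV]

end Stmt7Proof

open Stmt7Proof

/-- Let `q` be even and `U` an intersecting family of polynomials over `F_q` of degree at
most `2` with `|U| > (q^2 + q)/2`. If a subfamily `H ⊆ U` with `|H| > q^2/2` passes through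
a common point `(α, β)`, then every `f ∈ U` satisfies `f(α) = β`. -/
theorem stmt7 (F : Type*) [Field F] [Fintype F] (hq : Even (Fintype.card F))
    (U : Finset (Polynomial F)) (hdeg : ∀ f ∈ U, f.natDegree ≤ 2)
    (hint : ∀ f ∈ U, ∀ g ∈ U, ∃ x : F, f.eval x = g.eval x)
    (hU : Fintype.card F ^ 2 + Fintype.card F < 2 * U.card)
    (H : Finset (Polynomial F)) (hHU : H ⊆ U)
    (hH : Fintype.card F ^ 2 < 2 * H.card)
    (α β : F) (hαβ : ∀ h ∈ H, h.eval α = β) :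
    ∀ f ∈ U, f.eval α = β := by
  classical
  haveI hch : CharP F 2 := by
    have hrc : ringChar F = 2 :=
      FiniteField.even_card_iff_char_two.mpr (Nat.even_iff.mp hq)
    have := ringChar.charP F
    rwa [hrc] at this
  have h2 : (2:F) = 0 := CharTwo.two_eq_zero
  -- eval formula
  have eval3 : ∀ g ∈ U, ∀ x : F,
      g.eval x = g.coeff 0 + g.coeff 1 * x + g.coeff 2 * x ^ 2 := by
    intro g hg x
    rw [Polynomial.eval_eq_sum_range' (n := 3) (lt_of_le_of_lt (hdeg g hg) (by norm_num))]
    simp only [Finset.sum_range_succ, Finset.sum_range_zero, pow_zero, pow_one,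
      mul_one, zero_add]
  set τ : Polynomial F → F × F × F := fun g => (g.coeff 2, g.coeff 1, g.eval α + β)
    with hτ
  have hτinj : Set.InjOn τ U := by
    intro g hg g' hg' hgg
    have h1 : g.coeff 2 = g'.coeff 2 := congrArg Prod.fst hgg
    have h21 : g.coeff 1 = g'.coeff 1 := congrArg (fun p => p.2.1) hgg
    have h22 : g.eval α = g'.eval α := by
      have := congrArg (fun p : F × F × F => p.2.2) hgg
      simp only [hτ] at this
      exact add_right_cancel this
    have h0 : g.coeff 0 = g'.coeff 0 := by
      have e1 := eval3 g hg α
      have e2 := eval3 g' hg' α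
      rw [e1, e2, h1, h21] at h22
      exact add_right_cancel (add_right_cancel h22)
    ext n
    match n with
    | 0 => exact h0
    | 1 => exact h21
    | 2 => exact h1
    | (n+3) =>
      rw [Polynomial.coeff_eq_zero_of_natDegree_lt
          (lt_of_le_of_lt (hdeg g hg) (by omega)),
        Polynomial.coeff_eq_zero_of_natDegree_lt
          (lt_of_le_of_lt (hdeg g' hg') (by omega))]
  set V := U.image τ with hV
  set W := H.image τ with hW
  have hVcard : V.card = U.card := Finset.card_image_of_injOn hτinj
  have hWcard : W.card = H.card :=
    Finset.card_image_of_injOn (hτinj.mono (by exact_mod_cast hHU))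
  -- transfer of evaluation
  have hQeval : ∀ g ∈ U, ∀ y : F,
      (τ g).1 * y ^ 2 + (τ g).2.1 * y + (τ g).2.2 = g.eval (y + α) + β := by
    intro g hg y
    rw [eval3 g hg (y + α)]
    simp only [hτ]
    rw [eval3 g hg α]
    have : (y + α) ^ 2 = y ^ 2 + α ^ 2 := CharTwo.add_sq y α
    rw [this]
    ring
  have hmain := key V ?hint2 ?hV2 W ?hWV ?hW2 ?hW0
  case hint2 =>
    intro p hp p' hp'
    obtain ⟨g, hg, rfl⟩ := Finset.mem_image.mp hp
    obtain ⟨g', hg', rfl⟩ := Finset.mem_image.mp hp'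
    obtain ⟨x, hx⟩ := hint g hg g' hg'
    refine ⟨x + α, ?_⟩
    rw [hQeval g hg (x + α), hQeval g' hg' (x + α)]
    have hxa : x + α + α = x := by
      rw [add_assoc, CharTwo.add_self_eq_zero, add_zero]
    rw [hxa, hx]
  case hV2 => rw [hVcard]; exact hU
  case hWV => exact Finset.image_subset_image hHU
  case hW2 => rw [hWcard]; exact hH
  case hW0 =>
    intro p hp
    obtain ⟨h, hh, rfl⟩ := Finset.mem_image.mp hp
    simp only [hτ]
    rw [hαβ h hh, CharTwo.add_self_eq_zero]
  intro f hf
  have := hmain (τ f) (Finset.mem_image_of_mem τ hf)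
  simp only [hτ] at this
  linear_combination this - β * h2
end

section
/- Let q be odd and let U be an intersecting family of polynomials over F_q of degree at most 2 with |U| > (q^2 + 2q − 1)/2. Suppose H ⊆ U has more than (q^2 + q)/2 elements and there exist α, β ∈ F_q such that h(α) = β for every h ∈ H. Then f(α) = β for every polynomial f ∈ U. -/
open Polynomial
open Finset

lemma stmt8_eval_deg2 {F : Type*} [Field F] (p : F[X]) (hp : p.natDegree ≤ 2) (x : F) :
    p.eval x = p.coeff 0 + p.coeff 1 * x + p.coeff 2 * x^2 := by
  rw [Polynomial.eval_eq_sum_range' (Nat.lt_succ_of_le hp)]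
  simp [Finset.sum_range_succ]

lemma stmt8_sqroots_card (F : Type*) [Field F] [Fintype F] [DecidableEq F] (two_ne : (2:F) ≠ 0)
    (e : F) (he : e ≠ 0) (y0 : F) (hy0 : y0^2 = e) :
    (univ.filter fun y : F => y^2 = e).card = 2 := by
  have hy0ne : y0 ≠ 0 := by rintro rfl; simp at hy0; exact he hy0.symm
  have : (univ.filter fun y : F => y^2 = e) = {y0, -y0} := by
    ext y
    simp only [mem_filter, mem_univ, true_and, mem_insert, mem_singleton]
    constructor
    · intro hy
      have : (y - y0) * (y + y0) = 0 := by ring_nf; rw [hy, hy0]; ring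
      rcases mul_eq_zero.1 this with h | h
      · left; linear_combination h
      · right; linear_combination h
    · rintro (rfl | rfl) <;> simp [hy0]
  rw [this]
  rw [card_insert_of_notMem, card_singleton]
  simp only [mem_singleton]
  intro h
  apply hy0ne
  have : (2:F) * y0 = 0 := by linear_combination h
  exact (mul_eq_zero.1 this).resolve_left two_ne

lemma stmt8_count_main (F : Type*) [Field F] [Fintype F] [DecidableEq F] (two_ne : (2:F) ≠ 0) :
    2 * (univ.filter fun p : F × F => p.1 ≠ 0 ∧ ∃ y : F, y^2 = p.2^2 - p.1).card
      + Fintype.card F = Fintype.card F ^ 2 := by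
  classical
  set q := Fintype.card F with hqdef
  set S : Finset (F × F) := univ.filter fun p : F × F => p.1 ≠ 0 ∧ ∃ y : F, y^2 = p.2^2 - p.1 with hS
  set T : Finset ((F × F) × F) :=
    univ.filter (fun z : (F × F) × F => z.1.1 ≠ 0 ∧ z.2^2 = z.1.2^2 - z.1.1) with hT
  set Z : Finset (F × F) := S.filter (fun p => p.2^2 = p.1) with hZ
  have hfib : T.card = ∑ p ∈ S, (T.filter fun z => z.1 = p).card := by
    apply card_eq_sum_card_fiberwise
    intro z hz
    simp only [hT, Finset.mem_coe, mem_filter, mem_univ, true_and] at hz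
    simp only [hS, Finset.mem_coe, Finset.mem_filter, mem_univ, true_and]
    exact ⟨hz.1, ⟨z.2, hz.2⟩⟩
  have hfib2 : ∀ p ∈ S, (T.filter fun z => z.1 = p).card
      = (univ.filter fun y : F => y^2 = p.2^2 - p.1).card := by
    intro p hp
    simp only [hS, mem_filter, mem_univ, true_and] at hp
    apply card_bij (fun z _ => z.2)
    · intro z hz
      simp only [hT, mem_filter, mem_univ, true_and] at hz
      simp only [mem_filter, mem_univ, true_and]
      rw [hz.1.2, hz.2]
    · intro z1 h1 z2 h2 he
      simp only [hT, mem_filter, mem_univ, true_and] at h1 h2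
      exact Prod.ext (h1.2.trans h2.2.symm) he
    · intro y hy
      simp only [mem_filter, mem_univ, true_and] at hy
      refine ⟨(p, y), ?_, rfl⟩
      simp only [hT, mem_filter, mem_univ, true_and]
      exact ⟨⟨hp.1, hy⟩, trivial⟩
  have hfib3 : ∀ p ∈ S, (univ.filter fun y : F => y^2 = p.2^2 - p.1).card
      = if p.2^2 = p.1 then 1 else 2 := by
    intro p hp
    simp only [hS, mem_filter, mem_univ, true_and] at hp
    by_cases hc : p.2^2 = p.1
    · rw [if_pos hc]
      have : (univ.filter fun y : F => y^2 = p.2^2 - p.1) = {0} := by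
        ext y; simp only [mem_filter, mem_univ, true_and, mem_singleton]
        rw [hc, sub_self, pow_eq_zero_iff (by norm_num)]
      rw [this, card_singleton]
    · rw [if_neg hc]
      obtain ⟨y0, hy0⟩ := hp.2
      exact stmt8_sqroots_card F two_ne _ (fun h => hc (by linear_combination h)) y0 hy0
  have hTZ : T.card + Z.card = 2 * S.card := by
    rw [hfib]
    rw [sum_congr rfl (fun p hp => (hfib2 p hp).trans (hfib3 p hp))]
    rw [hZ, card_filter]
    rw [← sum_add_distrib]
    rw [Finset.sum_congr rfl (g := fun _ => 2) (fun p _ => by by_cases h : p.2^2 = p.1 <;> simp [h])]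
    rw [sum_const, smul_eq_mul, mul_comm]
  have hZcard : Z.card + 1 = q := by
    have : Z = (univ.filter fun t : F => t ≠ 0).image (fun t => (t^2, t)) := by
      ext p
      simp only [hZ, hS, mem_filter, mem_univ, true_and, mem_image]
      constructor
      · rintro ⟨⟨h1, -⟩, h2⟩
        exact ⟨p.2, fun h0 => h1 (by rw [← h2, h0]; ring), Prod.ext h2 rfl⟩
      · rintro ⟨t, ht, rfl⟩
        exact ⟨⟨fun h => ht (pow_eq_zero_iff (by norm_num) |>.1 h), ⟨0, by ring⟩⟩, rfl⟩
    rw [this, card_image_of_injective _ (fun a b h => (Prod.ext_iff.1 h).2),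
      filter_ne', card_erase_of_mem (mem_univ 0), card_univ]
    have : 1 ≤ q := Fintype.card_pos
    omega
  have hTW : T.card = (univ.filter fun p : F × F => p.1^2 ≠ p.2^2).card := by
    apply card_bij (fun z _ => (z.1.2, z.2))
    · intro z hz
      simp only [hT, mem_filter, mem_univ, true_and] at hz ⊢
      intro h
      exact hz.1 (by linear_combination h + hz.2)
    · intro z1 h1 z2 h2 he
      simp only [hT, mem_filter, mem_univ, true_and] at h1 h2
      obtain ⟨he1, he2⟩ := Prod.ext_iff.1 he
      refine Prod.ext (Prod.ext ?_ he1) he2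
      linear_combination h1.2 - h2.2 + (z1.1.2 + z2.1.2) * he1 - (z1.2 + z2.2) * he2
    · intro p hp
      simp only [mem_filter, mem_univ, true_and] at hp
      refine ⟨((p.1^2 - p.2^2, p.1), p.2), ?_, rfl⟩
      simp only [hT, mem_filter, mem_univ, true_and]
      exact ⟨sub_ne_zero.2 hp, by ring⟩
  have hsplit : (univ.filter fun p : F × F => p.1^2 = p.2^2).card
      + (univ.filter fun p : F × F => p.1^2 ≠ p.2^2).card = q^2 := by
    rw [card_filter_add_card_filter_not, card_univ, Fintype.card_prod, ← hqdef, sq]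
  have hdiag : (univ.filter fun p : F × F => p.2 = p.1).card = q := by
    have : (univ.filter fun p : F × F => p.2 = p.1) = univ.image (fun t : F => (t, t)) := by
      ext p
      simp only [mem_filter, mem_univ, true_and, mem_image]
      constructor
      · intro h; exact ⟨p.1, Prod.ext rfl h.symm⟩
      · rintro ⟨t, rfl⟩; rfl
    rw [this, card_image_of_injective _ (fun a b h => (Prod.ext_iff.1 h).1), card_univ]
  have hadiag : (univ.filter fun p : F × F => p.2 = -p.1).card = q := by
    have : (univ.filter fun p : F × F => p.2 = -p.1) = univ.image (fun t : F => (t, -t)) := by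
      ext p
      simp only [mem_filter, mem_univ, true_and, mem_image]
      constructor
      · intro h; exact ⟨p.1, Prod.ext rfl h.symm⟩
      · rintro ⟨t, rfl⟩; rfl
    rw [this, card_image_of_injective _ (fun a b h => (Prod.ext_iff.1 h).1), card_univ]
  have hEcard : (univ.filter fun p : F × F => p.1^2 = p.2^2).card + 1 = 2 * q := by
    have hun : (univ.filter fun p : F × F => p.1^2 = p.2^2)
        = (univ.filter fun p : F × F => p.2 = p.1) ∪ (univ.filter fun p : F × F => p.2 = -p.1) := by
      ext p
      simp only [mem_filter, mem_univ, true_and, mem_union]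
      constructor
      · intro h
        have : (p.1 - p.2) * (p.1 + p.2) = 0 := by linear_combination h
        rcases mul_eq_zero.1 this with h' | h'
        · left; linear_combination -h'
        · right; linear_combination h'
      · rintro (h | h) <;> rw [h] <;> ring
    have hin : (univ.filter fun p : F × F => p.2 = p.1) ∩ (univ.filter fun p : F × F => p.2 = -p.1)
        = {((0:F), (0:F))} := by
      ext p
      simp only [mem_inter, mem_filter, mem_univ, true_and, mem_singleton, Prod.ext_iff]
      constructor
      · rintro ⟨h1, h2⟩
        have hp1 : p.1 = 0 := by
          have : (2:F) * p.1 = 0 := by linear_combination h2 - h1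
          exact (mul_eq_zero.1 this).resolve_left two_ne
        exact ⟨hp1, h1.trans hp1⟩
      · rintro ⟨h1, h2⟩; rw [h1, h2]; constructor <;> ring
    have := card_union_add_card_inter (univ.filter fun p : F × F => p.2 = p.1)
      (univ.filter fun p : F × F => p.2 = -p.1)
    rw [hin, hdiag, hadiag, card_singleton] at this
    rw [hun]
    omega
  have hq1 : 1 ≤ q := Fintype.card_pos
  omega

/-- Let `q` be odd and `U` an intersecting family of polynomials over `F_q` of degree at
most `2` with `|U| > (q^2 + 2q − 1)/2`. If a subfamily `H ⊆ U` with `|H| > (q^2 + q)/2`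
passes through a common point `(α, β)`, then every `f ∈ U` satisfies `f(α) = β`. -/
theorem stmt8 (F : Type*) [Field F] [Fintype F] (hq : Odd (Fintype.card F))
    (U : Finset (Polynomial F)) (hdeg : ∀ f ∈ U, f.natDegree ≤ 2)
    (hint : ∀ f ∈ U, ∀ g ∈ U, ∃ x : F, f.eval x = g.eval x)
    (hU : Fintype.card F ^ 2 + 2 * Fintype.card F - 1 < 2 * U.card)
    (H : Finset (Polynomial F)) (hHU : H ⊆ U)
    (hH : Fintype.card F ^ 2 + Fintype.card F < 2 * H.card)
    (α β : F) (hαβ : ∀ h ∈ H, h.eval α = β) :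
    ∀ f ∈ U, f.eval α = β := by
  classical
  intro f hf
  by_contra hne
  set q := Fintype.card F with hqdef
  have two_ne : (2:F) ≠ 0 := by
    intro h2
    have hc : ringChar F = 2 := CharP.ringChar_of_prime_eq_zero Nat.prime_two h2
    have := FiniteField.even_card_of_char_two (F := F) hc
    simp [Nat.odd_iff] at hq; omega
  have four_ne : (4:F) ≠ 0 := by
    intro h4; exact two_ne (by
      have : (2:F) * 2 = 0 := by linear_combination h4
      exact (mul_eq_zero.1 this).elim id id)
  set c : F := β - f.eval α with hcdef
  have hcne : c ≠ 0 := sub_ne_zero.2 (Ne.symm hne)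
  set S : Finset (F × F) :=
    univ.filter (fun p : F × F => ∃ x : F, (x - α) * (p.1 * x + p.2) = -c) with hSdef
  -- Step A: injection from H into S
  have hinj : H.card ≤ S.card := by
    apply Finset.card_le_card_of_injOn
      (fun h => ((h - f).coeff 2, (h - f).coeff 1 + (h - f).coeff 2 * α))
    · intro h hh
      have hdg : (h - f).natDegree ≤ 2 :=
        le_trans (natDegree_sub_le h f) (max_le (hdeg h (hHU hh)) (hdeg f hf))
      have e2 := stmt8_eval_deg2 _ hdg α
      rw [show (h - f).eval α = c by simp [hαβ h hh, hcdef]] at e2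
      obtain ⟨x, hx⟩ := hint h (hHU hh) f hf
      have e1 := stmt8_eval_deg2 _ hdg x
      rw [show (h - f).eval x = 0 by simp [hx]] at e1
      simp only [hSdef, Finset.mem_coe, Finset.mem_filter, mem_univ, true_and]
      exact ⟨x, by linear_combination e2 - e1⟩
    · intro h1 hh1 h2 hh2 heq
      obtain ⟨heq1, heq2⟩ := Prod.ext_iff.1 heq
      simp only at heq1 heq2
      have hb : (h1 - f).coeff 1 = (h2 - f).coeff 1 := by
        linear_combination heq2 - α * heq1
      have hd1 : (h1 - f).natDegree ≤ 2 :=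
        le_trans (natDegree_sub_le h1 f) (max_le (hdeg h1 (hHU hh1)) (hdeg f hf))
      have hd2 : (h2 - f).natDegree ≤ 2 :=
        le_trans (natDegree_sub_le h2 f) (max_le (hdeg h2 (hHU hh2)) (hdeg f hf))
      have ea1 := stmt8_eval_deg2 _ hd1 α
      rw [show (h1 - f).eval α = c by simp [hαβ h1 hh1, hcdef]] at ea1
      have ea2 := stmt8_eval_deg2 _ hd2 α
      rw [show (h2 - f).eval α = c by simp [hαβ h2 hh2, hcdef]] at ea2
      have h0 : (h1 - f).coeff 0 = (h2 - f).coeff 0 := by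
        linear_combination ea2 - ea1 - α * hb - α^2 * heq1
      have hsub : h1 - f = h2 - f := by
        ext n
        rcases n with _ | _ | _ | n
        · exact h0
        · exact hb
        · exact heq1
        · rw [coeff_eq_zero_of_natDegree_lt (by omega), coeff_eq_zero_of_natDegree_lt (by omega)]
      have := sub_left_injective.eq_iff.1 hsub
      exact this
  -- the sets with a = 0 and a ≠ 0
  have hsplitS : (S.filter fun p : F × F => p.1 = 0).card
      + (S.filter fun p : F × F => ¬ p.1 = 0).card = S.card :=
    card_filter_add_card_filter_not _
  -- a = 0 part has q - 1 elements
  have hS0 : (S.filter fun p : F × F => p.1 = 0).card + 1 = q := by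
    have hset : (S.filter fun p : F × F => p.1 = 0)
        = ({(0:F)} : Finset F) ×ˢ (univ.erase (0:F)) := by
      ext p
      rw [mem_filter, mem_product, mem_singleton, mem_erase]
      constructor
      · rintro ⟨hpS, h1⟩
        rw [hSdef, mem_filter] at hpS
        obtain ⟨-, x, hx⟩ := hpS
        refine ⟨h1, ?_, mem_univ _⟩
        rintro h2
        rw [h1, h2] at hx
        simp at hx
        exact hcne hx
      · rintro ⟨h1, h2, -⟩
        refine ⟨?_, h1⟩
        rw [hSdef, mem_filter]
        refine ⟨mem_univ _, ⟨α - c * p.2⁻¹, ?_⟩⟩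
        rw [h1]
        field_simp
        ring
    rw [hset, card_product, card_singleton, card_erase_of_mem (mem_univ _), card_univ, one_mul]
    have : 1 ≤ q := Fintype.card_pos
    omega
  -- a ≠ 0 part
  set S' : Finset (F × F) :=
    univ.filter (fun p : F × F => p.1 ≠ 0 ∧ ∃ y : F, y^2 = p.2^2 - p.1) with hS'def
  have hbij : (S.filter fun p : F × F => ¬ p.1 = 0).card = S'.card := by
    apply card_bij (fun p _ => (4 * p.1 * c, p.2 + p.1 * α))
    · intro p hp
      rw [mem_filter] at hp
      obtain ⟨hpS, ha⟩ := hp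
      rw [hSdef, mem_filter] at hpS
      obtain ⟨-, x, hx⟩ := hpS
      rw [hS'def, mem_filter]
      refine ⟨mem_univ _, mul_ne_zero (mul_ne_zero four_ne ha) hcne,
        ⟨2 * p.1 * (x - α) + (p.2 + p.1 * α), by linear_combination (4 * p.1) * hx⟩⟩
    · intro p1 hp1 p2 hp2 he
      obtain ⟨he1, he2⟩ := Prod.ext_iff.1 he
      simp only at he1 he2
      have ha : p1.1 = p2.1 := mul_left_cancel₀ four_ne (mul_right_cancel₀ hcne he1)
      exact Prod.ext ha (by linear_combination he2 - α * ha)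
    · intro p hp
      rw [hS'def, mem_filter] at hp
      obtain ⟨-, hd, y, hy⟩ := hp
      have h4c : (4:F) * c ≠ 0 := mul_ne_zero four_ne hcne
      set a : F := p.1 / (4 * c) with hadef
      have ha : a ≠ 0 := div_ne_zero hd h4c
      have had : 4 * a * c = p.1 := by
        rw [hadef]; field_simp
      set b : F := p.2 - a * α with hbdef
      have h2a : (2:F) * a ≠ 0 := mul_ne_zero two_ne ha
      set u : F := (y - p.2) / (2 * a) with hudef
      have hu : 2 * a * u = y - p.2 := by
        rw [hudef]; field_simp
      refine ⟨(a, b), ?_, ?_⟩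
      · rw [mem_filter]
        refine ⟨?_, ha⟩
        rw [hSdef, mem_filter]
        refine ⟨mem_univ _, ⟨α + u, ?_⟩⟩
        simp only
        have h4a : (4:F) * a ≠ 0 := mul_ne_zero four_ne ha
        have key : 4 * a * (((α + u) - α) * (a * (α + u) + b) + c) = 0 := by
          rw [hbdef]
          linear_combination (2 * a * u + y + p.2) * hu + hy + had
        have := (mul_eq_zero.1 key).resolve_left h4a
        linear_combination this
      · exact Prod.ext had (by rw [hbdef]; ring)
  have hS'count : 2 * S'.card + q = q ^ 2 := by
    rw [hS'def]
    exact stmt8_count_main F two_ne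
  omega
end

section
/- Let k ≥ 2 and let U be an intersecting family of polynomials over F_q of degree at most k. Suppose there are more than (q−1)·q^{k−2} polynomials h_i in U whose coefficient of x^k equals a fixed c ∈ F_q, and suppose there exist α, β ∈ F_q such that h_i(α) = β for all these polynomials. Then every polynomial f ∈ U whose coefficient of x^k is not c satisfies f(α) = β. -/
open Polynomial

lemma stmt9_aux (F : Type*) [Field F] (k : ℕ) (hk : 2 ≤ k) (α : F)
    (p q : Polynomial F) (hp : p.natDegree ≤ k - 1) (hq : q.natDegree ≤ k - 1)
    (htop : p.coeff (k-1) = q.coeff (k-1))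
    (hmid : ∀ i : Fin (k-2), p.coeff (i+1) = q.coeff (i+1))
    (hev : p.eval α = q.eval α) : p = q := by
  have hco : ∀ n, 0 < n → (p - q).coeff n = 0 := by
    intro n hn
    rw [Polynomial.coeff_sub]
    rcases lt_trichotomy n (k-1) with h | h | h
    · have hi : n - 1 < k - 2 := by omega
      have h2 := hmid ⟨n-1, hi⟩
      have h1 : (n - 1) + 1 = n := by omega
      simp only [Fin.val_mk] at h2
      rw [h1] at h2
      rw [h2, sub_self]
    · rw [h, htop, sub_self]
    · rw [Polynomial.coeff_eq_zero_of_natDegree_lt (lt_of_le_of_lt hp h),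
          Polynomial.coeff_eq_zero_of_natDegree_lt (lt_of_le_of_lt hq h), sub_self]
  have hd : (p - q).natDegree ≤ 0 := by
    rw [Polynomial.natDegree_le_iff_coeff_eq_zero]
    exact fun m hm => hco m hm
  have hC : p - q = Polynomial.C ((p-q).coeff 0) := Polynomial.eq_C_of_natDegree_le_zero hd
  have h0 : (p - q).eval α = 0 := by rw [Polynomial.eval_sub, hev, sub_self]
  rw [hC] at h0
  simp only [Polynomial.eval_C] at h0
  have : p - q = 0 := by rw [hC, h0, map_zero]
  exact sub_eq_zero.mp this

/-- Let `U` be an intersecting family of polynomials over `F_q` of degree at most `k` (`k ≥ 2`).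
If more than `(q−1) q^{k−2}` polynomials in `U` have coefficient of `x^k` equal to a fixed `c`
and all of them pass through the point `(α, β)`, then every `f ∈ U` whose coefficient of `x^k`
is not `c` satisfies `f(α) = β`. -/
theorem stmt9 (F : Type*) [Field F] [Fintype F] (k : ℕ) (hk : 2 ≤ k)
    (U : Finset (Polynomial F)) (hdeg : ∀ f ∈ U, f.natDegree ≤ k)
    (hint : ∀ f ∈ U, ∀ g ∈ U, ∃ x : F, f.eval x = g.eval x)
    (c : F) (H : Finset (Polynomial F)) (hHU : H ⊆ U)
    (hHc : ∀ h ∈ H, h.coeff k = c)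
    (hH : (Fintype.card F - 1) * Fintype.card F ^ (k - 2) < H.card)
    (α β : F) (hαβ : ∀ h ∈ H, h.eval α = β) :
    ∀ f ∈ U, f.coeff k ≠ c → f.eval α = β := by
  classical
  intro f hf hfc
  by_contra hfa
  -- every h ∈ H gives a root of h - f away from α
  have key : ∀ h ∈ H, ∃ x : F, x ≠ α ∧ (h - f).eval x = 0 := by
    intro h hh
    obtain ⟨x, hx⟩ := hint h (hHU hh) f hf
    refine ⟨x, ?_, by simp [hx]⟩
    rintro rfl
    exact hfa (hx ▸ hαβ h hh)
  -- basic facts about g = h - f for h ∈ H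
  have hgdeg : ∀ h ∈ H, (h - f).natDegree = k := by
    intro h hh
    have hle : (h - f).natDegree ≤ k :=
      le_trans (Polynomial.natDegree_sub_le h f) (max_le (hdeg h (hHU hh)) (hdeg f hf))
    have hne : (h - f).coeff k ≠ 0 := by
      rw [Polynomial.coeff_sub, hHc h hh]
      exact sub_ne_zero.mpr (Ne.symm hfc)
    exact le_antisymm hle (Polynomial.le_natDegree_of_ne_zero hne)
  obtain ⟨y, hy⟩ := exists_ne α
  set φ : Polynomial F → {x : F // x ≠ α} × (Fin (k-2) → F) := fun h =>
    if hh : ∃ x : F, x ≠ α ∧ (h - f).eval x = 0 then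
      (⟨hh.choose, hh.choose_spec.1⟩,
        fun i => ((h - f) /ₘ (X - C hh.choose)).coeff (i+1))
    else (⟨y, hy⟩, 0) with hφ
  have hinj : Set.InjOn φ H := by
    intro h1 h1m h2 h2m heq
    have k1 := key h1 h1m
    have k2 := key h2 h2m
    rw [hφ] at heq
    simp only [dif_pos k1, dif_pos k2] at heq
    have hx12 : k1.choose = k2.choose := by
      have := congrArg (fun p => (p.1 : F)) heq
      simpa using this
    have hsnd : ∀ i : Fin (k-2), ((h1 - f) /ₘ (X - C k1.choose)).coeff (i+1)
        = ((h2 - f) /ₘ (X - C k1.choose)).coeff (i+1) := by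
      intro i
      have := congrArg (fun p => p.2 i) heq
      simp only at this
      rw [← hx12] at this
      exact this
    have hroot2' := k2.choose_spec.2
    rw [← hx12] at hroot2'
    set x := k1.choose with hxdef
    have hxne : x ≠ α := k1.choose_spec.1
    have hroot1 : (h1 - f).IsRoot x := k1.choose_spec.2
    have hroot2 : (h2 - f).IsRoot x := hroot2'
    set g1 := (h1 - f) /ₘ (X - C x) with hg1
    set g2 := (h2 - f) /ₘ (X - C x) with hg2
    have hfac1 : (X - C x) * g1 = h1 - f :=
      (Polynomial.mul_divByMonic_eq_iff_isRoot).mpr hroot1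
    have hfac2 : (X - C x) * g2 = h2 - f :=
      (Polynomial.mul_divByMonic_eq_iff_isRoot).mpr hroot2
    have hd1 : g1.natDegree = k - 1 := by
      rw [hg1, Polynomial.natDegree_divByMonic _ (Polynomial.monic_X_sub_C x),
          hgdeg h1 h1m, Polynomial.natDegree_X_sub_C]
    have hd2 : g2.natDegree = k - 1 := by
      rw [hg2, Polynomial.natDegree_divByMonic _ (Polynomial.monic_X_sub_C x),
          hgdeg h2 h2m, Polynomial.natDegree_X_sub_C]
    -- leading coefficients agree
    have hcoeffk : ∀ (g : Polynomial F), g.natDegree = k - 1 →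
        ((X - C x) * g).coeff k = g.coeff (k-1) := by
      intro g hg
      have hk1 : k = (k-1) + 1 := by omega
      rw [mul_comm, hk1, Polynomial.coeff_mul_X_sub_C]
      have : g.coeff (k - 1 + 1) = 0 :=
        Polynomial.coeff_eq_zero_of_natDegree_lt (by omega)
      rw [this]
      simp
    have htop : g1.coeff (k-1) = g2.coeff (k-1) := by
      have e1 : (h1 - f).coeff k = c - f.coeff k := by
        rw [Polynomial.coeff_sub, hHc h1 h1m]
      have e2 : (h2 - f).coeff k = c - f.coeff k := by
        rw [Polynomial.coeff_sub, hHc h2 h2m]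
      rw [← hcoeffk g1 hd1, ← hcoeffk g2 hd2, hfac1, hfac2, e1, e2]
    -- middle coefficients agree
    have hmid : ∀ i : Fin (k-2), g1.coeff (i+1) = g2.coeff (i+1) := hsnd
    -- evaluations at α agree
    have hev : g1.eval α = g2.eval α := by
      have e1 : (α - x) * g1.eval α = β - f.eval α := by
        have := congrArg (Polynomial.eval α) hfac1
        simpa [hαβ h1 h1m] using this
      have e2 : (α - x) * g2.eval α = β - f.eval α := by
        have := congrArg (Polynomial.eval α) hfac2
        simpa [hαβ h2 h2m] using this
      have hax : (α - x) ≠ 0 := sub_ne_zero.mpr (Ne.symm hxne)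
      exact mul_left_cancel₀ hax (e1.trans e2.symm)
    have hg12 : g1 = g2 :=
      stmt9_aux F k hk α g1 g2 (le_of_eq hd1) (le_of_eq hd2) htop hmid hev
    have : h1 - f = h2 - f := by rw [← hfac1, ← hfac2, hg12]
    exact sub_left_injective this
  -- counting
  have hcard : H.card ≤ (Fintype.card F - 1) * Fintype.card F ^ (k - 2) := by
    have h1 : H.card ≤ Fintype.card ({x : F // x ≠ α} × (Fin (k-2) → F)) := by
      rw [← Finset.card_univ]
      exact Finset.card_le_card_of_injOn φ (fun h _ => Finset.mem_univ _) (by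
        intro a ha b hb hab
        exact hinj (by simpa using ha) (by simpa using hb) hab)
    calc H.card ≤ _ := h1
      _ = (Fintype.card F - 1) * Fintype.card F ^ (k - 2) := by
          have hcs : Fintype.card {x : F // x ≠ α} = Fintype.card F - 1 := by
            have := Fintype.card_subtype_compl (fun x : F => x = α)
            simp only [Fintype.card_subtype_eq] at this
            exact this
          rw [Fintype.card_prod, hcs, Fintype.card_fun, Fintype.card_fin]
  omega
end

section
/- Let q > 2 be even and let U be an intersecting family of polynomials over F_q of degree at most 2 with |U| = q^2 − ε, where ε < q·√q/4 − q/8 − √q/8. Then the graphs of the polynomials in U share a common point; that is, there exist α, β ∈ F_q such that f(α) = β for every f ∈ U. -/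
open Finset

section W
set_option linter.unusedSectionVars false
variable {F : Type*} [Field F] [Fintype F] [DecidableEq F]

/-- `W = {w^2 + w}` as a Finset. -/
def Wfin (F : Type*) [Field F] [Fintype F] [DecidableEq F] : Finset F :=
  univ.image (fun w => w^2 + w)

lemma my_neg_eq_self (h2 : ∀ a : F, a + a = 0) (x : F) : -x = x :=
  neg_eq_of_add_eq_zero_left (h2 x)

lemma my_add_sq (h2 : ∀ a : F, a + a = 0) (x y : F) : (x+y)^2 = x^2 + y^2 := by
  have h := h2 (x*y)
  ring_nf
  linear_combination h

lemma my_sq_surj (h2 : ∀ a : F, a + a = 0) (s : F) : ∃ w : F, w^2 = s := by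
  have hinj : Function.Injective (fun w : F => w^2) := by
    intro x y hxy
    simp only at hxy
    have : (x + y)^2 = 0 := by rw [my_add_sq h2, hxy]; exact h2 _
    have hxy0 : x + y = 0 := by
      exact pow_eq_zero_iff (n := 2) (by norm_num) |>.mp this
    have := neg_eq_of_add_eq_zero_left hxy0
    rw [← this, my_neg_eq_self h2]
  exact Finite.injective_iff_surjective.mp hinj s

lemma mem_Wfin {z : F} : z ∈ Wfin F ↔ ∃ w : F, w^2 + w = z := by
  simp [Wfin, eq_comm]

lemma Wfin_zero : (0 : F) ∈ Wfin F := mem_Wfin.mpr ⟨0, by ring⟩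

lemma Wfin_add (h2 : ∀ a : F, a + a = 0) {x y : F} (hx : x ∈ Wfin F) (hy : y ∈ Wfin F) :
    x + y ∈ Wfin F := by
  obtain ⟨w, hw⟩ := mem_Wfin.mp hx
  obtain ⟨v, hv⟩ := mem_Wfin.mp hy
  exact mem_Wfin.mpr ⟨w + v, by rw [my_add_sq h2]; linear_combination hw + hv⟩

lemma card_Wfin (h2 : ∀ a : F, a + a = 0) : 2 * (Wfin F).card = Fintype.card F := by
  have key : ∀ y ∈ Wfin F, (univ.filter (fun w : F => w^2 + w = y)).card = 2 := by
    intro y hy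
    obtain ⟨w0, hw0⟩ := mem_Wfin.mp hy
    have : (univ.filter (fun w : F => w^2 + w = y)) = {w0, w0 + 1} := by
      ext w
      simp only [mem_filter, mem_univ, true_and, mem_insert, mem_singleton]
      constructor
      · intro hw
        have hd : (w + w0)^2 + (w + w0) = 0 := by
          rw [my_add_sq h2]; linear_combination hw + hw0 + h2 y
        have : (w + w0) * ((w + w0) + 1) = 0 := by linear_combination hd
        rcases mul_eq_zero.mp this with h | h
        · left
          have := neg_eq_of_add_eq_zero_left h
          rw [← this, my_neg_eq_self h2]
        · right
          have : w + w0 = -1 := eq_neg_of_add_eq_zero_left h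
          rw [my_neg_eq_self h2] at this
          linear_combination this - h2 w0
      · intro hw
        rcases hw with h | h
        · rw [h]; exact hw0
        · rw [h, my_add_sq h2]
          linear_combination hw0 + h2 1
    rw [this]
    rw [card_insert_of_notMem, card_singleton]
    simp only [mem_singleton]
    intro h
    have : (1 : F) = 0 := by linear_combination -h
    exact one_ne_zero this
  have := Finset.card_eq_sum_card_fiberwise (f := fun w : F => w^2 + w)
    (s := univ) (t := Wfin F) (fun x _ => mem_Wfin.mpr ⟨x, rfl⟩)
  rw [card_univ] at this
  rw [this, Finset.sum_congr rfl key, Finset.sum_const, smul_eq_mul, mul_comm]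

lemma exists_not_Wfin (h2 : ∀ a : F, a + a = 0) : ∃ z : F, z ∉ Wfin F := by
  by_contra h
  push_neg at h
  have : (Wfin F) = univ := eq_univ_of_forall h
  have hc := card_Wfin h2 (F := F)
  rw [this, card_univ] at hc
  have : 0 < Fintype.card F := Fintype.card_pos
  omega

/-- key counting: if `g ≠ 0` and `u ≠ 0` there is `f ≠ 0` with `f*g/u^2 ∉ W`. -/
lemma exists_f_not_W (h2 : ∀ a : F, a + a = 0) {g u : F} (hg : g ≠ 0) (hu : u ≠ 0) :
    ∃ f : F, ¬ (∃ w : F, w^2 + w = f * g / u^2) := by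
  obtain ⟨z, hz⟩ := exists_not_Wfin h2 (F := F)
  refine ⟨z * u^2 / g, fun hw => hz (mem_Wfin.mpr ?_)⟩
  obtain ⟨w, hw⟩ := hw
  refine ⟨w, ?_⟩
  rw [hw]
  field_simp

end W
open Finset
section W2
set_option linter.unusedSectionVars false
variable {F : Type*} [Field F] [Fintype F] [DecidableEq F]

lemma zero_of_many (h2 : ∀ a : F, a + a = 0) {v u w : F} (hu : u ≠ 0)
    (S : Finset F) (hS : Fintype.card F < 2 * S.card)
    (hall : ∀ a ∈ S, ∃ ww : F, ww^2 + ww = (v*a + w)/u^2) : v = 0 := by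
  by_contra hv
  have hinj : Set.InjOn (fun a : F => (v*a + w)/u^2) S := by
    intro x _ y _ hxy
    simp only at hxy
    have hu2 : u^2 ≠ 0 := pow_ne_zero _ hu
    field_simp at hxy
    exact mul_left_cancel₀ hv (add_right_cancel hxy)
  have hmap : ∀ a ∈ S, (v*a + w)/u^2 ∈ Wfin F := by
    intro a ha; exact mem_Wfin.mpr (hall a ha)
  have := Finset.card_le_card_of_injOn _ hmap hinj
  have hc := card_Wfin h2 (F := F)
  omega

lemma zero_of_mul (h2 : ∀ a : F, a + a = 0) {g u : F} (hu : u ≠ 0)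
    (S : Finset F) (h0 : (0:F) ∉ S) (hS : Fintype.card F < 2 * S.card + 2)
    (hall : ∀ t ∈ S, ∃ ww : F, ww^2 + ww = g*t/u^2) : g = 0 := by
  by_contra hg
  have hu2 : u^2 ≠ 0 := pow_ne_zero _ hu
  have hinj : Set.InjOn (fun t : F => g*t/u^2) S := by
    intro x _ y _ hxy
    simp only at hxy
    field_simp at hxy
    tauto
  have hmap : ∀ t ∈ S, g*t/u^2 ∈ (Wfin F).erase 0 := by
    intro t ht
    refine Finset.mem_erase.mpr ⟨?_, mem_Wfin.mpr (hall t ht)⟩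
    intro hz
    rw [div_eq_zero_iff] at hz
    rcases hz with hz | hz
    · rcases mul_eq_zero.mp hz with h | h
      · exact hg h
      · exact h0 (h ▸ ht)
    · exact hu2 hz
  have := Finset.card_le_card_of_injOn _ hmap hinj
  have hce : ((Wfin F).erase 0).card = (Wfin F).card - 1 :=
    Finset.card_erase_of_mem Wfin_zero
  have hc := card_Wfin h2 (F := F)
  have hWpos : 0 < (Wfin F).card := Finset.card_pos.mpr ⟨0, Wfin_zero⟩
  omega
end W2
lemma key_id {F : Type*} [Field F] (h2 : ∀ a : F, a + a = 0) (u v X Y Z f e : F)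
    (hu : u ≠ 0) (hv : v ≠ 0) :
    (f*X + e*Y)/u^2 + ((e/((u/v)^2))*Y + f*Z)/v^2 = f*(X + (u/v)^2*Z)/u^2 := by
  field_simp
  ring_nf
  linear_combination h2 (v ^ 2 * e * Y)
open Finset

section MAIN
variable {F : Type*} [Field F] [Fintype F] [DecidableEq F]

theorem main_comb (h2 : ∀ a : F, a + a = 0)
    (m ε : ℕ) (hm1 : 1 ≤ m) (hm2 : 2*m < Fintype.card F) (hq4 : 4 ≤ Fintype.card F)
    (hN3 : 3*ε < (2*Fintype.card F - 5)*(m+1))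
    (K : Finset (F × F)) (γ : F → F → F)
    (hKcard : K.card + ε = Fintype.card F ^ 2)
    (hcond : ∀ p ∈ K, ∀ p' ∈ K, p.2 ≠ p'.2 →
       ∃ w : F, w^2 + w = (γ p.1 p.2 + γ p'.1 p'.2) * (p.1 + p'.1) / (p.2 + p'.2)^2) :
    ∃ α β : F, ∀ p ∈ K, γ p.1 p.2 = β + p.1 * α^2 + p.2 * α := by
  classical
  set q := Fintype.card F with hqdef
  -- columns
  set col : F → Finset F := fun b => univ.filter (fun a => (a,b) ∈ K) with hcoldef
  have hcolmem : ∀ a b : F, a ∈ col b ↔ (a,b) ∈ K := by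
    intro a b; simp [hcoldef]
  have hcol_le : ∀ b, (col b).card ≤ q := by
    intro b
    calc (col b).card ≤ univ.card := card_filter_le _ _
    _ = q := card_univ
  have hcolsum : ∑ b : F, (col b).card = K.card := by
    rw [Finset.card_eq_sum_card_fiberwise (f := fun p : F × F => p.2) (t := univ)
      (fun x _ => mem_univ _)]
    apply Finset.sum_congr rfl
    intro b _
    have himg : K.filter (fun p => p.2 = b) = (col b).image (fun a => (a, b)) := by
      ext p
      constructor
      · intro hp
        obtain ⟨hp1, hp2⟩ := Finset.mem_filter.mp hp
        refine Finset.mem_image.mpr ⟨p.1, ?_, ?_⟩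
        · rw [hcolmem]
          rw [show (p.1, b) = p from Prod.ext rfl hp2.symm]
          exact hp1
        · exact Prod.ext rfl hp2.symm
      · intro hp
        obtain ⟨a, ha, hap⟩ := Finset.mem_image.mp hp
        refine Finset.mem_filter.mpr ⟨?_, ?_⟩
        · rw [← hap]; exact (hcolmem a b).mp ha
        · rw [← hap]
      
    rw [himg, Finset.card_image_of_injective _ (fun a1 a2 h => ((Prod.mk.injEq _ _ _ _).mp h).1)]
  have hmiss : ∑ b : F, (q - (col b).card) = ε := by
    have h1 : ∑ b : F, (q - (col b).card) + ∑ b : F, (col b).card = ∑ _b : F, q := by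
      rw [← Finset.sum_add_distrib]
      exact Finset.sum_congr rfl (fun b _ => Nat.sub_add_cancel (hcol_le b))
    rw [Finset.sum_const, card_univ, smul_eq_mul, hcolsum, ← hqdef] at h1
    have : q * q = q ^ 2 := by ring
    omega
  set Heavy : F → Prop := fun b => q ≤ (col b).card + m with hHdef
  have hHdec : DecidablePred Heavy := fun b => by unfold Heavy; infer_instance
  set Hv : Finset F := univ.filter Heavy with hHvdef
  have hLcard : (univ.filter (fun b => ¬ Heavy b)).card * (m+1) ≤ ε := by
    rw [← hmiss]
    calc (univ.filter (fun b => ¬ Heavy b)).card * (m+1)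
        = ∑ _b ∈ univ.filter (fun b => ¬ Heavy b), (m+1) := by
          rw [Finset.sum_const, smul_eq_mul]
      _ ≤ ∑ b ∈ univ.filter (fun b => ¬ Heavy b), (q - (col b).card) := by
          apply Finset.sum_le_sum
          intro b hb
          simp only [mem_filter, hHdef] at hb
          have := hcol_le b
          omega
      _ ≤ ∑ b : F, (q - (col b).card) :=
          Finset.sum_le_sum_of_subset (filter_subset _ _)
  have hHvL : Hv.card + (univ.filter (fun b => ¬ Heavy b)).card = q := by
    rw [hHvdef]; exact card_filter_add_card_filter_not _
  have h3L : 3 * (univ.filter (fun b => ¬ Heavy b)).card < 2*q - 5 := by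
    have h1 : 3 * ((univ.filter (fun b => ¬ Heavy b)).card * (m+1)) ≤ 3 * ε :=
      Nat.mul_le_mul_left _ hLcard
    have := lt_of_le_of_lt h1 hN3
    rw [show 3 * ((univ.filter (fun b => ¬ Heavy b)).card * (m+1))
        = (3 * (univ.filter (fun b => ¬ Heavy b)).card) * (m+1) by ring] at this
    exact lt_of_mul_lt_mul_right this (Nat.zero_le _)
  have hHv3 : q - 1 < 3 * (Hv.card - 2) := by omega
  have hHv4 : 4 ≤ Hv.card := by omega
  have hqeven : 2 ∣ q := ⟨(Wfin F).card, (card_Wfin h2).symm⟩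
  -- realization
  have hreal : ∀ b b', Heavy b → Heavy b' → ∀ t : F, ∃ a : F, a ∈ col b ∧ a + t ∈ col b' := by
    intro b b' hb hb' t
    have hBcard : ((col b').image (fun x => x + t)).card = (col b').card :=
      Finset.card_image_of_injective _ (add_left_injective t)
    have hint : 0 < ((col b) ∩ ((col b').image (fun x => x + t))).card := by
      have h1 := Finset.card_inter_add_card_union (col b) ((col b').image (fun x => x + t))
      have h2 : ((col b) ∪ ((col b').image (fun x => x + t))).card ≤ q := by
        calc _ ≤ (univ : Finset F).card := Finset.card_le_card (subset_univ _)
        _ = q := card_univ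
      have hb2 := hb; have hb2' := hb'
      rw [hHdef] at hb2 hb2'
      omega
    obtain ⟨a, ha⟩ := Finset.card_pos.mp hint
    obtain ⟨ha1, ha2⟩ := Finset.mem_inter.mp ha
    obtain ⟨x, hx, hxa⟩ := Finset.mem_image.mp ha2
    refine ⟨a, ha1, ?_⟩
    have : a + t = x := by linear_combination -hxa + h2 t
    rwa [this]
  have hP : ∀ a b a' b' : F, a ∈ col b → a' ∈ col b' → b ≠ b' →
      ∃ w : F, w^2 + w = (γ a b + γ a' b') * (a + a') / (b + b')^2 := by
    intro a b a' b' ha ha' hbb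
    exact hcond (a,b) ((hcolmem a b).mp ha) (a',b') ((hcolmem a' b').mp ha') hbb
  have hsumne : ∀ b b' : F, b ≠ b' → b + b' ≠ 0 := by
    intro b b' hbb h
    exact hbb (by linear_combination h - h2 b')
  have WP_add : ∀ {x y : F}, (∃ w : F, w^2 + w = x) → (∃ w : F, w^2 + w = y) →
      (∃ w : F, w^2 + w = x + y) := by
    intro x y ⟨w1, hw1⟩ ⟨w2, hw2⟩
    exact ⟨w1 + w2, by rw [my_add_sq h2]; linear_combination hw1 + hw2⟩
  -- well-definedness of difference function
  have hexHv2 : ∀ b : F, ∃ b', Heavy b' ∧ b' ≠ b := by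
    intro b
    have : 0 < (Hv.erase b).card := by
      have := Finset.pred_card_le_card_erase (s := Hv) (a := b)
      omega
    obtain ⟨b', hb'⟩ := Finset.card_pos.mp this
    obtain ⟨hne', hmem⟩ := Finset.mem_erase.mp hb'
    exact ⟨b', (mem_filter.mp hmem).2, hne'⟩
  have hWD : ∀ b, Heavy b → ∀ a1 a2 a3 a4 : F, a1 ∈ col b → a2 ∈ col b → a3 ∈ col b →
      a4 ∈ col b → a1 + a2 = a3 + a4 → γ a1 b + γ a2 b = γ a3 b + γ a4 b := by
    intro b hb a1 a2 a3 a4 h1m h2m h3m h4m hsum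
    obtain ⟨b', hb', hbne⟩ := hexHv2 b
    have hu : b + b' ≠ 0 := hsumne b b' hbne.symm
    have hall : ∀ a ∈ col b', ∃ ww : F, ww^2 + ww =
        ((γ a1 b + γ a2 b + γ a3 b + γ a4 b) * a +
         (γ a1 b * a1 + γ a2 b * a2 + γ a3 b * a3 + γ a4 b * a4))/(b+b')^2 := by
      intro a ha
      have c1 := hP a1 b a b' h1m ha hbne.symm
      have c2 := hP a2 b a b' h2m ha hbne.symm
      have c3 := hP a3 b a b' h3m ha hbne.symm
      have c4 := hP a4 b a b' h4m ha hbne.symm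
      obtain ⟨w, hw⟩ := WP_add (WP_add c1 c2) (WP_add c3 c4)
      refine ⟨w, ?_⟩
      rw [hw, ← add_div, ← add_div, ← add_div]
      congr 1
      linear_combination (γ a b') * hsum + h2 ((γ a b') * (a3 + a4 + 2*a))
    have hcb' : q < 2 * (col b').card := by
      rw [hHdef] at hb'
      omega
    have hvz := zero_of_many h2 hu (col b') (by rw [← hqdef]; exact hcb') hall
    linear_combination hvz - h2 (γ a3 b + γ a4 b)
  have hrealSelf : ∀ b, Heavy b → ∀ e : F, ∃ a, a ∈ col b ∧ a + e ∈ col b :=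
    fun b hb e => hreal b b hb hb e
  set M : F → F → F := fun b e => if hb : Heavy b then
      γ (hrealSelf b hb e).choose b + γ ((hrealSelf b hb e).choose + e) b else 0 with hMdef
  have hM : ∀ b (hb : Heavy b) (e a : F), a ∈ col b → a + e ∈ col b →
      M b e = γ a b + γ (a+e) b := by
    intro b hb e a ha ha'
    rw [hMdef]
    simp only [dif_pos hb]
    obtain ⟨h1, h1'⟩ := (hrealSelf b hb e).choose_spec
    exact hWD b hb _ _ a (a+e) h1 h1' ha ha' (by linear_combination h2 (hrealSelf b hb e).choose - h2 a)
  have hne : ∀ b, Heavy b → ∃ a, a ∈ col b := by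
    intro b hb
    rw [hHdef] at hb
    have : 0 < (col b).card := by omega
    obtain ⟨a, ha⟩ := Finset.card_pos.mp this
    exact ⟨a, ha⟩
  have hM0 : ∀ b, Heavy b → M b 0 = 0 := by
    intro b hb
    obtain ⟨a, ha⟩ := hne b hb
    rw [hM b hb 0 a ha (by rwa [add_zero]), add_zero]
    exact h2 _
  have hRel2 : ∀ b b', Heavy b → Heavy b' → b ≠ b' → ∀ e A : F,
      ∃ w : F, w^2 + w = (A * M b e + e * M b' A) / (b+b')^2 := by
    intro b b' hb hb' hbb e A
    obtain ⟨a, ha, hae⟩ := hrealSelf b hb e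
    obtain ⟨a', ha', haA⟩ := hrealSelf b' hb' A
    have c11 := hP a b a' b' ha ha' hbb
    have c12 := hP a b (a'+A) b' ha haA hbb
    have c21 := hP (a+e) b a' b' hae ha' hbb
    have c22 := hP (a+e) b (a'+A) b' hae haA hbb
    obtain ⟨w, hw⟩ := WP_add (WP_add c11 c12) (WP_add c21 c22)
    refine ⟨w, ?_⟩
    rw [hw, ← add_div, ← add_div, ← add_div,
      hM b hb e a ha hae, hM b' hb' A a' ha' haA]
    congr 1
    linear_combination h2 (γ a b * (a+a') + γ (a+e) b * (a+e+a') + γ a' b' * (a+a')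
      + γ (a'+A) b' * (a+a'+A))
  have hRel13 : ∀ b1 b2 b3 : F, Heavy b1 → Heavy b2 → Heavy b3 → b1 ≠ b2 → b2 ≠ b3 →
      ∀ e, M b1 e = ((b1+b2)/(b2+b3))^2 * M b3 (e / ((b1+b2)/(b2+b3))^2) := by
    intro b1 b2 b3 hb1 hb2 hb3 h12 h23 e
    have hu12 : b1 + b2 ≠ 0 := hsumne b1 b2 h12
    have hu23 : b2 + b3 ≠ 0 := hsumne b2 b3 h23
    set c : F := ((b1+b2)/(b2+b3))^2 with hc
    have hcne : c ≠ 0 := pow_ne_zero _ (div_ne_zero hu12 hu23)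
    have hgz : M b1 e + c * M b3 (e / c) = 0 := by
      by_contra hgne
      obtain ⟨f, hf⟩ := exists_f_not_W h2 hgne hu12
      apply hf
      have r1 := hRel2 b1 b2 hb1 hb2 h12 e f
      have r2 := hRel2 b2 b3 hb2 hb3 h23 f (e / c)
      obtain ⟨w, hw⟩ := WP_add r1 r2
      refine ⟨w, ?_⟩
      rw [hw, hc]
      exact key_id h2 (b1+b2) (b2+b3) (M b1 e) (M b2 f)
        (M b3 (e/((b1+b2)/(b2+b3))^2)) f e hu12 hu23
    linear_combination hgz - h2 (c * M b3 (e / c))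
  -- the multiplier
  have hsqinj : ∀ x y : F, x^2 = y^2 → x = y := by
    intro x y hxy
    have hz : (x + y)^2 = 0 := by rw [my_add_sq h2]; linear_combination hxy + h2 (y^2)
    have hxy0 : x + y = 0 := pow_eq_zero_iff (n := 2) (by norm_num) |>.mp hz
    linear_combination hxy0 - h2 y
  have hmult : ∃ mm : F, ∀ b, Heavy b → ∀ e, M b e = mm * e := by
    obtain ⟨b3, hb3m⟩ := Finset.card_pos.mp (show 0 < Hv.card by omega)
    have hb3 : Heavy b3 := (mem_filter.mp hb3m).2
    obtain ⟨b1, hb1, h13⟩ := hexHv2 b3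
    set T : Finset F := Hv \ {b1, b3} with hT
    have hTcard : Hv.card - 2 ≤ T.card := by
      have h1 := Finset.le_card_sdiff ({b1, b3} : Finset F) Hv
      have h2' : ({b1, b3} : Finset F).card ≤ 2 := Finset.card_insert_le _ _ |>.trans (by simp)
      rw [← hT] at h1
      omega
    have hTmem : ∀ b2 ∈ T, Heavy b2 ∧ b2 ≠ b1 ∧ b2 ≠ b3 := by
      intro b2 hb2
      rw [hT] at hb2
      obtain ⟨hm', hnm⟩ := Finset.mem_sdiff.mp hb2
      simp only [Finset.mem_insert, Finset.mem_singleton, not_or] at hnm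
      exact ⟨(mem_filter.mp hm').2, hnm.1, hnm.2⟩
    set cf : F → F := fun b2 => ((b1+b2)/(b2+b3))^2 with hcf
    have hcfne : ∀ b2 ∈ T, cf b2 ≠ 0 := by
      intro b2 hb2
      obtain ⟨_, hn1, hn3⟩ := hTmem b2 hb2
      exact pow_ne_zero _ (div_ne_zero (hsumne b1 b2 (Ne.symm hn1)) (hsumne b2 b3 hn3))
    have hcfinj : ∀ x ∈ T, ∀ y ∈ T, cf x = cf y → x = y := by
      intro x hx y hy hxy
      obtain ⟨_, hx1, hx3⟩ := hTmem x hx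
      obtain ⟨_, hy1, hy3⟩ := hTmem y hy
      have hbase : (b1+x)/(x+b3) = (b1+y)/(y+b3) := hsqinj _ _ hxy
      have hx3' : x + b3 ≠ 0 := hsumne x b3 hx3
      have hy3' : y + b3 ≠ 0 := hsumne y b3 hy3
      rw [div_eq_div_iff hx3' hy3'] at hbase
      have h13' : b1 + b3 ≠ 0 := hsumne b1 b3 h13
      have hxy0 : (b1 + b3) * (x + y) = 0 := by
        linear_combination hbase + h2 (b1*x + b3*y)
      rcases mul_eq_zero.mp hxy0 with h | h
      · exact absurd h h13'
      · linear_combination h - h2 y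
    have hS : ∀ b2 ∈ T, ∀ e, M b1 e = cf b2 * M b3 (e / cf b2) := by
      intro b2 hb2 e
      obtain ⟨hH2, hn1, hn3⟩ := hTmem b2 hb2
      exact hRel13 b1 b2 b3 hb1 hH2 hb3 (Ne.symm hn1) hn3 e
    obtain ⟨b2', hb2'⟩ : T.Nonempty := Finset.card_pos.mp (by omega)
    have hτ : ∀ b2 ∈ T, ∀ y : F, M b3 ((cf b2 / cf b2') * y) = (cf b2 / cf b2') * M b3 y := by
      intro b2 hb2 y
      have hc : cf b2 ≠ 0 := hcfne b2 hb2
      have hc' : cf b2' ≠ 0 := hcfne b2' hb2'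
      have h1 := hS b2 hb2 (cf b2 * y)
      have h1' := hS b2' hb2' (cf b2 * y)
      rw [mul_div_cancel_left₀ y hc] at h1
      have heq : cf b2' * M b3 (cf b2 * y / cf b2') = cf b2 * M b3 y := by
        rw [← h1', h1]
      have harg : cf b2 * y / cf b2' = (cf b2 / cf b2') * y := by ring
      rw [harg] at heq
      apply mul_left_cancel₀ hc'
      rw [heq, ← mul_assoc, mul_comm (cf b2') (cf b2 / cf b2'), div_mul_cancel₀ _ hc']
    set Γ : Subgroup Fˣ := {
      carrier := {t : Fˣ | ∀ y : F, M b3 ((t : F) * y) = (t : F) * M b3 y}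
      mul_mem' := by
        intro s t hs ht y
        push_cast
        simp only [mul_assoc]
        rw [hs ((t:F) * y), ht y]
      one_mem' := by intro y; simp
      inv_mem' := by
        intro t ht y
        have h1 := ht (((t⁻¹ : Fˣ) : F) * y)
        rw [← mul_assoc] at h1
        have ht0 : (t : F) ≠ 0 := Units.ne_zero t
        have hinv : (t : F) * ((t⁻¹ : Fˣ) : F) = 1 := Units.mul_inv t
        rw [hinv, one_mul] at h1
        rw [Units.val_inv_eq_inv_val] at h1 ⊢
        apply mul_left_cancel₀ ht0
        rw [← mul_assoc, mul_inv_cancel₀ ht0, one_mul, ← h1] } with hΓ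
    have hmemΓ : ∀ t : Fˣ, t ∈ Γ ↔ ∀ y : F, M b3 ((t : F) * y) = (t : F) * M b3 y := by
      intro t; rw [hΓ]; exact Iff.rfl
    have hqm1 : Fintype.card Fˣ = q - 1 := by rw [Fintype.card_units, ← hqdef]
    set Γfin : Finset Fˣ := univ.filter (fun t => t ∈ Γ) with hΓfin
    have hcardΓfin : Γfin.card = Nat.card Γ := by
      rw [Nat.card_eq_fintype_card, hΓfin]
      exact (Fintype.card_subtype _).symm
    have hTΓ : T.card ≤ Γfin.card := by
      apply Finset.card_le_card_of_injOn
        (fun b2 => if h : cf b2 / cf b2' ≠ 0 then Units.mk0 _ h else 1)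
      · intro b2 hb2
        have hne0 : cf b2 / cf b2' ≠ 0 := div_ne_zero (hcfne _ hb2) (hcfne _ hb2')
        simp only [dif_pos hne0, Finset.mem_coe]
        simp only [hΓfin, mem_filter, mem_univ, true_and]
        rw [hmemΓ]
        intro y
        simp only [Units.val_mk0]
        exact hτ b2 hb2 y
      · intro x hx y hy hxy
        have hnx : cf x / cf b2' ≠ 0 := div_ne_zero (hcfne _ hx) (hcfne _ hb2')
        have hny : cf y / cf b2' ≠ 0 := div_ne_zero (hcfne _ hy) (hcfne _ hb2')
        have hxy' : (if h : cf x / cf b2' ≠ 0 then Units.mk0 _ h else 1)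
            = (if h : cf y / cf b2' ≠ 0 then Units.mk0 _ h else 1) := hxy
        rw [dif_pos hnx, dif_pos hny] at hxy'
        have hv := congrArg (Units.val) hxy'
        simp only [Units.val_mk0] at hv
        rw [div_eq_div_iff (hcfne _ hb2') (hcfne _ hb2')] at hv
        exact hcfinj x hx y hy (mul_right_cancel₀ (hcfne _ hb2') hv)
    have hdvd : Nat.card Γ ∣ q - 1 := by
      have hd := Subgroup.card_subgroup_dvd_card Γ
      rwa [Nat.card_eq_fintype_card (α := Fˣ), hqm1] at hd
    have hq1pos : 3 ≤ q - 1 := by omega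
    have hcardbig : q - 1 < 3 * Nat.card Γ := by
      have h1 : q - 1 < 3 * T.card := by omega
      omega
    have htop : ∀ t : Fˣ, t ∈ Γ := by
      have hcard : Nat.card Γ = q - 1 := by
        by_contra hnec
        obtain ⟨k, hk⟩ := hdvd
        have hkodd : ¬ (2 ∣ q - 1) := by omega
        have hk0 : k ≠ 0 := by rintro rfl; omega
        have hk1 : k ≠ 1 := by rintro rfl; omega
        have hk2 : k ≠ 2 := by rintro rfl; exact hkodd ⟨Nat.card Γ, by omega⟩
        have hk3 : 3 ≤ k := by omega
        have : 3 * Nat.card Γ ≤ q - 1 := by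
          calc 3 * Nat.card Γ ≤ k * Nat.card Γ := Nat.mul_le_mul_right _ hk3
          _ = q - 1 := (hk.trans (mul_comm _ _)).symm
        omega
      intro t
      have heq := Subgroup.eq_top_of_card_eq Γ
        (by rw [hcard, Nat.card_eq_fintype_card (α := Fˣ), hqm1])
      rw [heq]
      exact Subgroup.mem_top t
    have h3M : ∀ e : F, M b3 e = M b3 1 * e := by
      intro e
      rcases eq_or_ne e 0 with he | he
      · rw [he, hM0 b3 hb3, mul_zero]
      · have hprop := (hmemΓ (Units.mk0 e he)).mp (htop _) 1
        simp only [Units.val_mk0, mul_one] at hprop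
        rw [hprop, mul_comm]
    refine ⟨M b3 1, ?_⟩
    intro b hb e
    rcases eq_or_ne b b3 with hbb | hbb
    · rw [hbb]; exact h3M e
    · have hcard2 : 0 < (Hv \ {b, b3}).card := by
        have hsd := Finset.le_card_sdiff ({b, b3} : Finset F) Hv
        have h2' : ({b, b3} : Finset F).card ≤ 2 :=
          Finset.card_insert_le _ _ |>.trans (by simp)
        omega
      obtain ⟨b2, hb2m⟩ := Finset.card_pos.mp hcard2
      obtain ⟨hb2H, hb2n⟩ := Finset.mem_sdiff.mp hb2m
      simp only [Finset.mem_insert, Finset.mem_singleton, not_or] at hb2n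
      have hb2Heavy : Heavy b2 := (mem_filter.mp hb2H).2
      have hrel := hRel13 b b2 b3 hb hb2Heavy hb3 (Ne.symm hb2n.1) hb2n.2 e
      rw [hrel, h3M]
      have hcne2 : ((b+b2)/(b2+b3)) ≠ 0 :=
        div_ne_zero (hsumne b b2 (Ne.symm hb2n.1)) (hsumne b2 b3 hb2n.2)
      rw [mul_left_comm, ← mul_div_assoc, mul_div_cancel_left₀ _ (pow_ne_zero 2 hcne2)]
  obtain ⟨mm, hMall⟩ := hmult
  obtain ⟨α, hα⟩ := my_sq_surj h2 mm
  set r : F → F := fun b => if hb : Heavy b then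
      γ (hne b hb).choose b + mm * (hne b hb).choose else 0 with hrdef
  have hr : ∀ b (hb : Heavy b) (a : F), a ∈ col b → γ a b = mm * a + r b := by
    intro b hb a ha
    have hrval : r b = γ (hne b hb).choose b + mm * (hne b hb).choose := by
      rw [hrdef]; exact dif_pos hb
    have ha0 : (hne b hb).choose ∈ col b := (hne b hb).choose_spec
    have hkey : (hne b hb).choose + (a + (hne b hb).choose) = a := by
      linear_combination h2 (hne b hb).choose
    have hMv := hM b hb (a + (hne b hb).choose) (hne b hb).choose ha0 (by rw [hkey]; exact ha)
    rw [hkey, hMall b hb (a + (hne b hb).choose)] at hMv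
    rw [hrval]
    linear_combination -hMv - h2 (γ (hne b hb).choose b)
  have hrr : ∀ b b', Heavy b → Heavy b' → b ≠ b' → r b + r b' = (b+b') * α := by
    intro b b' hb hb' hbb
    have hu : b + b' ≠ 0 := hsumne b b' hbb
    have hgz : r b + r b' + (b+b') * α = 0 := by
      refine zero_of_mul h2 hu (univ.erase 0) (Finset.notMem_erase 0 univ) ?_ ?_
      · rw [Finset.card_erase_of_mem (mem_univ 0), card_univ, ← hqdef]
        omega
      · intro t ht
        obtain ⟨a, ha, ha'⟩ := hreal b b' hb hb' t
        have hcnd := hP a b (a+t) b' ha ha' hbb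
        have hW1 : ∃ w : F, w^2 + w = (α^2*t^2 + (b+b')*(α*t))/(b+b')^2 :=
          ⟨α*t/(b+b'), by field_simp⟩
        obtain ⟨w, hw⟩ := WP_add hcnd hW1
        refine ⟨w, ?_⟩
        rw [hw, ← add_div]
        congr 1
        rw [hr b hb a ha, hr b' hb' (a+t) ha', ← hα]
        linear_combination h2 (2*α^2*a^2 + 2*α^2*a*t + α^2*t^2 + a*(r b + r b'))
    linear_combination hgz - h2 ((b+b')*α)
  obtain ⟨b3, hb3mem⟩ : ∃ b3, b3 ∈ Hv := ⟨_, (Finset.card_pos.mp (by omega)).choose_spec⟩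
  have hb3 : Heavy b3 := (mem_filter.mp hb3mem).2
  set β : F := r b3 + b3 * α with hβdef
  have hrb : ∀ b, Heavy b → r b = β + b * α := by
    intro b hb
    rcases eq_or_ne b b3 with h | h
    · rw [h, hβdef]; linear_combination - h2 (b3 * α)
    · have := hrr b b3 hb hb3 h
      rw [hβdef]; linear_combination this - h2 (r b3)
  -- final
  refine ⟨α, β, ?_⟩
  rintro ⟨a, b⟩ hp
  obtain ⟨b', hb', hbne⟩ := hexHv2 b
  have hu : b + b' ≠ 0 := hsumne b b' hbne.symm
  have hamem : a ∈ col b := (hcolmem a b).mpr hp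
  have hgz : γ a b + (β + a * mm + b * α) = 0 := by
    refine zero_of_mul h2 hu (((col b').image (fun a' => a + a')).erase 0)
      (Finset.notMem_erase _ _) ?_ ?_
    · have h1 : ((col b').image (fun a' => a + a')).card = (col b').card :=
        Finset.card_image_of_injective _ (fun x y hxy => by
          have : a + x = a + y := hxy
          linear_combination this)
      have h2' := Finset.pred_card_le_card_erase
        (s := (col b').image (fun a' => a + a')) (a := 0)
      have hb'c : q ≤ (col b').card + m := by rw [hHdef] at hb'; exact hb'
      rw [← hqdef]
      omega
    · intro t ht
      obtain ⟨htne, htmem⟩ := Finset.mem_erase.mp ht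
      obtain ⟨a', ha', hta⟩ := Finset.mem_image.mp htmem
      have hcnd := hP a b a' b' hamem ha' hbne.symm
      have hW1 : ∃ w : F, w^2 + w = (α^2*t^2 + (b+b')*(α*t))/(b+b')^2 :=
        ⟨α*t/(b+b'), by field_simp⟩
      obtain ⟨w, hw⟩ := WP_add hcnd hW1
      refine ⟨w, ?_⟩
      rw [hw, ← add_div]
      congr 1
      rw [hr b' hb' a' ha', hrb b' hb', ← hta, ← hα]
      linear_combination h2 ((a+a')*(α^2*a' + b'*α))
  show γ a b = β + a * α^2 + b * α
  rw [hα]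
  linear_combination hgz - h2 (β + a*mm + b*α)

end MAIN
open Finset Polynomial

/-- If `q > 2` is even and `U` is an intersecting family of polynomials over `F_q` of degree
at most `2` with `|U| = q^2 − ε` where `ε < q√q/4 − q/8 − √q/8`, then the graphs of the
polynomials in `U` share a common point. -/
theorem stmt11 (F : Type*) [Field F] [Fintype F]
    (heven : Even (Fintype.card F)) (hq : 2 < Fintype.card F)
    (U : Finset (Polynomial F)) (hdeg : ∀ f ∈ U, f.natDegree ≤ 2)
    (hint : ∀ f ∈ U, ∀ g ∈ U, ∃ x : F, f.eval x = g.eval x)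
    (ε : ℕ) (hcard : U.card + ε = Fintype.card F ^ 2)
    (hε : (ε : ℝ) < (Fintype.card F : ℝ) * Real.sqrt (Fintype.card F) / 4
      - (Fintype.card F : ℝ) / 8 - Real.sqrt (Fintype.card F) / 8) :
    ∃ α β : F, ∀ f ∈ U, f.eval α = β := by
  classical
  set q := Fintype.card F with hqdef
  have hch : ringChar F = 2 := FiniteField.even_card_iff_char_two.mpr (Nat.even_iff.mp heven)
  haveI : CharP F 2 := hch ▸ ringChar.charP F
  have h2 : ∀ a : F, a + a = 0 := fun a => by
    have h20 : (2 : F) = 0 := by exact_mod_cast CharP.cast_eq_zero F 2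
    linear_combination a * h20
  have heval : ∀ f ∈ U, ∀ x : F, f.eval x = f.coeff 0 + f.coeff 1 * x + f.coeff 2 * x^2 := by
    intro f hf x
    have hd : f.natDegree < 3 := lt_of_le_of_lt (hdeg f hf) (by norm_num)
    rw [Polynomial.eval_eq_sum_range' hd]
    rw [Finset.sum_range_succ, Finset.sum_range_succ, Finset.sum_range_succ,
      Finset.sum_range_zero]
    ring
  have hext : ∀ f ∈ U, ∀ g ∈ U, f.coeff 0 = g.coeff 0 → f.coeff 1 = g.coeff 1 →
      f.coeff 2 = g.coeff 2 → f = g := by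
    intro f hf g hg e0 e1 e2
    apply Polynomial.ext
    intro n
    match n with
    | 0 => exact e0
    | 1 => exact e1
    | 2 => exact e2
    | (k+3) =>
      rw [Polynomial.coeff_eq_zero_of_natDegree_lt (lt_of_le_of_lt (hdeg f hf) (by omega)),
        Polynomial.coeff_eq_zero_of_natDegree_lt (lt_of_le_of_lt (hdeg g hg) (by omega))]
  have hinj : ∀ f ∈ U, ∀ g ∈ U, f.coeff 2 = g.coeff 2 → f.coeff 1 = g.coeff 1 → f = g := by
    intro f hf g hg e2 e1
    obtain ⟨x, hx⟩ := hint f hf g hg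
    rw [heval f hf x, heval g hg x, e1, e2] at hx
    have e0 : f.coeff 0 = g.coeff 0 := by linear_combination hx
    exact hext f hf g hg e0 e1 e2
  set K : Finset (F × F) := U.image (fun f => (f.coeff 2, f.coeff 1)) with hK
  have hKcard : K.card = U.card := by
    rw [hK]
    apply Finset.card_image_of_injOn
    intro f hf g hg hfg
    exact hinj f hf g hg (congrArg Prod.fst hfg) (congrArg Prod.snd hfg)
  set gam : F → F → F := fun a b =>
    if h : ∃ f, f ∈ U ∧ f.coeff 2 = a ∧ f.coeff 1 = b then h.choose.coeff 0 else 0 with hgam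
  have hgamval : ∀ f ∈ U, gam (f.coeff 2) (f.coeff 1) = f.coeff 0 := by
    intro f hf
    have hex : ∃ g, g ∈ U ∧ g.coeff 2 = f.coeff 2 ∧ g.coeff 1 = f.coeff 1 := ⟨f, hf, rfl, rfl⟩
    have : gam (f.coeff 2) (f.coeff 1) = hex.choose.coeff 0 := by
      rw [hgam]; exact dif_pos hex
    rw [this]
    obtain ⟨hgU, hg2, hg1⟩ := hex.choose_spec
    rw [hinj _ hgU f hf hg2 hg1]
  -- numeric facts
  have hq4 : 4 ≤ q := by
    obtain ⟨k, hk⟩ := heven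
    omega
  set mnat : ℕ := Nat.sqrt q / 2 with hmnat
  have hs2 : 2 ≤ Nat.sqrt q := Nat.le_sqrt.mpr (by omega)
  have hm1 : 1 ≤ mnat := by omega
  have hm2 : 2*mnat < q := by
    have h1 : Nat.sqrt q < q := Nat.sqrt_lt_self (by omega)
    omega
  have hN3 : 3*ε < (2*q - 5)*(mnat+1) := by
    obtain ⟨n, hp2, hcard2⟩ := FiniteField.card F 2
    rw [← hqdef] at hcard2
    have hn2 : 2 ≤ (n : ℕ) := by
      by_contra hn
      interval_cases h : (n : ℕ) <;> omega
    rcases eq_or_lt_of_le hn2 with hn | hn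
    · -- q = 4
      have hq4' : q = 4 := by rw [hcard2, ← hn]; norm_num
      have hsq4 : Real.sqrt (4:ℕ) = 2 := by
        rw [show ((4:ℕ):ℝ) = 2^2 by norm_num, Real.sqrt_sq (by norm_num : (0:ℝ) ≤ 2)]
      rw [hq4'] at hε ⊢
      rw [hsq4] at hε
      have hε1 : ε < 2 := by
        have : (ε : ℝ) < 2 := by nlinarith [hε]
        exact_mod_cast this
      have hm4 : mnat = 1 := by
        have h1 : Nat.sqrt q < q := Nat.sqrt_lt_self (by omega)
        rw [hmnat]
        omega
      rw [hm4]
      omega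
    · -- q ≥ 8
      have hq8 : 8 ≤ q := by
        rw [hcard2]
        calc (8:ℕ) = 2^3 := by norm_num
        _ ≤ 2^(n:ℕ) := Nat.pow_le_pow_right (by norm_num) (by omega)
      set s : ℝ := Real.sqrt q with hsdef
      have hs0 : 0 ≤ s := Real.sqrt_nonneg _
      have hssq : s^2 = q := Real.sq_sqrt (by positivity)
      have hsge2 : 2 ≤ s := by
        rw [hsdef]
        rw [show (2:ℝ) = Real.sqrt 4 by
          rw [show (4:ℝ) = 2^2 by norm_num, Real.sqrt_sq (by norm_num : (0:ℝ) ≤ 2)]]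
        apply Real.sqrt_le_sqrt
        exact_mod_cast (by omega : 4 ≤ q)
      have hsub : s < (Nat.sqrt q : ℝ) + 1 := by
        rw [hsdef]
        rw [show ((Nat.sqrt q : ℝ) + 1) = ((Nat.sqrt q + 1 : ℕ) : ℝ) by push_cast; ring]
        rw [Real.sqrt_lt' (by positivity)]
        rw [show (((Nat.sqrt q + 1 : ℕ)):ℝ)^2 = (((Nat.sqrt q + 1)^2 : ℕ) : ℝ) by push_cast; ring]
        exact_mod_cast Nat.lt_succ_sqrt' q
      have hmge : ((Nat.sqrt q : ℝ) + 1)/2 ≤ (mnat : ℝ) + 1 := by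
        have : Nat.sqrt q ≤ 2 * mnat + 1 := by omega
        have hc : (Nat.sqrt q : ℝ) ≤ 2 * (mnat:ℝ) + 1 := by exact_mod_cast this
        linarith
    -- now the chain
      have hsm : s/2 < (mnat : ℝ) + 1 := by linarith
      have hq5 : (5:ℝ) ≤ q := by exact_mod_cast (by omega : (5:ℕ) ≤ q)
      have hrhs : ((2*q - 5 : ℕ) : ℝ) = 2*(q:ℝ) - 5 := by
        push_cast [Nat.cast_sub (by omega : 5 ≤ 2*q)]
        ring
      have key : (3:ℝ)*ε < (2*(q:ℝ) - 5)*((mnat:ℝ)+1) := by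
        have h1 : (3:ℝ)*ε < 3*((q:ℝ)*s/4 - (q:ℝ)/8 - s/8) := by
          linarith [hε]
        have h2' : 3*((q:ℝ)*s/4 - (q:ℝ)/8 - s/8) ≤ (2*(q:ℝ) - 5)*(s/2) := by
          have hs8 : (8:ℝ) ≤ s^2 := by rw [hssq]; exact_mod_cast hq8
          have haux : (0:ℝ) ≤ 2*s^2 + 3*s - 17 := by linarith
          rw [← hssq]
          nlinarith [mul_nonneg hs0 haux]
        have h3 : (2*(q:ℝ) - 5)*(s/2) ≤ (2*(q:ℝ) - 5)*((mnat:ℝ)+1) := by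
          apply mul_le_mul_of_nonneg_left (le_of_lt hsm)
          linarith
        linarith
      have : ((3*ε : ℕ) : ℝ) < ((2*q - 5 : ℕ) : ℝ) * ((mnat + 1 : ℕ) : ℝ) := by
        rw [hrhs]
        push_cast
        exact key
      exact_mod_cast this
  -- intersecting condition
  have hcond : ∀ p ∈ K, ∀ p' ∈ K, p.2 ≠ p'.2 →
      ∃ w : F, w^2 + w = (gam p.1 p.2 + gam p'.1 p'.2) * (p.1 + p'.1) / (p.2 + p'.2)^2 := by
    intro p hp p' hp' hne
    rw [hK] at hp hp'
    obtain ⟨f, hf, hfp⟩ := Finset.mem_image.mp hp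
    obtain ⟨g, hg, hgp⟩ := Finset.mem_image.mp hp'
    rw [← hfp, ← hgp] at hne ⊢
    simp only at hne ⊢
    rw [hgamval f hf, hgamval g hg]
    obtain ⟨x, hx⟩ := hint f hf g hg
    rw [heval f hf x, heval g hg x] at hx
    have hd : f.coeff 1 + g.coeff 1 ≠ 0 := by
      intro h
      exact hne (by linear_combination h - h2 (g.coeff 1))
    have hnum : ((f.coeff 2 + g.coeff 2)*x)^2 + ((f.coeff 2 + g.coeff 2)*x)*(f.coeff 1 + g.coeff 1)
        = (f.coeff 0 + g.coeff 0)*(f.coeff 2 + g.coeff 2) := by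
      linear_combination (-(f.coeff 2 + g.coeff 2))*hx
        + h2 ((f.coeff 2 + g.coeff 2)*(f.coeff 2*x^2 + f.coeff 1*x - g.coeff 0))
    have root_id : ∀ e d s t : F, d ≠ 0 → (e*t)^2 + (e*t)*d = s*e →
        ((e*t/d)^2 + (e*t/d) = s*e/d^2) := by
      intro e d s t hdne hn
      field_simp
      linear_combination hn
    exact ⟨(f.coeff 2 + g.coeff 2)*x/(f.coeff 1 + g.coeff 1),
      root_id _ _ _ x hd hnum⟩
  have hKc : K.card + ε = q^2 := by rw [hKcard]; exact hcard
  obtain ⟨α, β, hαβ⟩ := main_comb h2 mnat ε hm1 hm2 hq4 hN3 K gam hKc hcond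
  refine ⟨α, β, ?_⟩
  intro f hf
  have hfK : (f.coeff 2, f.coeff 1) ∈ K := by
    rw [hK]; exact Finset.mem_image_of_mem _ hf
  have hval := hαβ _ hfK
  simp only at hval
  rw [hgamval f hf] at hval
  rw [heval f hf α]
  linear_combination hval + h2 (f.coeff 1 * α + f.coeff 2 * α^2)
end

section
/- Let q be a prime power with q > 9 if q is odd and q > 2 if q is even, let k > 1, and let U be an intersecting family of polynomials over F_q of degree at most k with |U| > q^k − q^{k−1}. If F and F' are both intersecting families of polynomials over F_q of degree at most k, each of size q^k and each containing U, then F = F'. That is, U extends uniquely to an intersecting family of q^k polynomials of degree at most k. -/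
open Polynomial

open scoped Classical

section Aux

variable (F : Type*) [Field F] [Fintype F]

noncomputable instance degLTFintype (n : ℕ) : Fintype (Polynomial.degreeLT F n) :=
  Fintype.ofEquiv (Fin n → F) (Polynomial.degreeLTEquiv F n).toEquiv.symm

/-- The finset of polynomials of degree `< n`. -/
noncomputable def PPn (n : ℕ) : Finset (Polynomial F) :=
  (Finset.univ : Finset (Polynomial.degreeLT F n)).image (fun x => x.1)

lemma mem_PPn {n : ℕ} {f : Polynomial F} : f ∈ PPn F n ↔ f.degree < n := by
  simp only [PPn, Finset.mem_image, Finset.mem_univ, true_and]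
  constructor
  · rintro ⟨x, rfl⟩; exact (Polynomial.mem_degreeLT).1 x.2
  · intro h; exact ⟨⟨f, Polynomial.mem_degreeLT.2 h⟩, rfl⟩

lemma mem_PPn_succ {n : ℕ} {f : Polynomial F} : f ∈ PPn F (n + 1) ↔ f.natDegree ≤ n := by
  rw [mem_PPn]
  constructor
  · intro h
    by_cases hf : f = 0
    · simp [hf]
    · exact Nat.lt_succ_iff.mp ((Polynomial.natDegree_lt_iff_degree_lt hf).mpr (by exact_mod_cast h))
  · intro h
    refine lt_of_le_of_lt Polynomial.degree_le_natDegree ?_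
    exact_mod_cast Nat.lt_succ_iff.mpr h

lemma card_PPn (n : ℕ) : (PPn F n).card = Fintype.card F ^ n := by
  rw [PPn, Finset.card_image_of_injective _ Subtype.val_injective, Finset.card_univ,
    Fintype.card_congr (Polynomial.degreeLTEquiv F n).toEquiv]
  simp

lemma card_dvd_filter {k : ℕ} (m : Polynomial F) (hm : m.Monic) (hjk : m.natDegree ≤ k) :
    ((PPn F (k + 1)).filter (fun f => m ∣ f)).card = Fintype.card F ^ (k + 1 - m.natDegree) := by
  have hm0 : m ≠ 0 := hm.ne_zero
  have hkk : k + 1 - m.natDegree = (k - m.natDegree) + 1 := by omega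
  rw [← card_PPn F (k + 1 - m.natDegree), hkk]
  refine Finset.card_bij' (fun f _ => f /ₘ m) (fun g _ => m * g) ?_ ?_ ?_ ?_
  · -- f in filter → f /ₘ m ∈ PPn (k - j + 1)
    intro f hf
    rw [Finset.mem_filter] at hf
    obtain ⟨hfP, hfd⟩ := hf
    have hfe : m * (f /ₘ m) = f := by
      have := Polynomial.modByMonic_add_div f m
      rwa [(Polynomial.modByMonic_eq_zero_iff_dvd hm).mpr hfd, zero_add] at this
    by_cases hf0 : f = 0
    · simp [hf0, Polynomial.zero_divByMonic, mem_PPn_succ]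
    · have hq0 : f /ₘ m ≠ 0 := by
        intro h0; rw [h0, mul_zero] at hfe; exact hf0 hfe.symm
      have : m.natDegree + (f /ₘ m).natDegree = f.natDegree := by
        rw [← Polynomial.natDegree_mul hm0 hq0, hfe]
      have hfk : f.natDegree ≤ k := (mem_PPn_succ F).1 hfP
      show f /ₘ m ∈ PPn F (k - m.natDegree + 1)
      rw [mem_PPn_succ]
      omega
  · -- g ∈ PPn → m * g ∈ filter
    intro g hg
    rw [Finset.mem_filter]
    refine ⟨?_, Dvd.intro g rfl⟩
    by_cases hg0 : g = 0
    · simp [hg0, mem_PPn_succ]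
    · rw [mem_PPn_succ] at hg ⊢
      rw [Polynomial.natDegree_mul hm0 hg0]
      omega
  · -- left inverse : m * (f /ₘ m) = f
    intro f hf
    rw [Finset.mem_filter] at hf
    have := Polynomial.modByMonic_add_div f m
    rwa [(Polynomial.modByMonic_eq_zero_iff_dvd hm).mpr hf.2, zero_add] at this
  · -- right inverse : (m * g) /ₘ m = g
    intro g _
    have h1 := Polynomial.modByMonic_add_div (m * g) m
    rw [(Polynomial.modByMonic_eq_zero_iff_dvd hm).mpr (Dvd.intro g rfl), zero_add] at h1
    exact mul_left_cancel₀ hm.ne_zero h1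

lemma card_one_root {k : ℕ} (hk : 1 ≤ k) (a : F) :
    ((PPn F (k + 1)).filter (fun f => f.eval a = 0)).card = Fintype.card F ^ k := by
  have h1 : ((PPn F (k + 1)).filter (fun f => f.eval a = 0)) =
      ((PPn F (k + 1)).filter (fun f => (X - C a) ∣ f)) := by
    refine Finset.filter_congr fun f _ => ?_
    rw [Polynomial.dvd_iff_isRoot]
    exact Iff.rfl
  rw [h1, card_dvd_filter F _ (Polynomial.monic_X_sub_C a)
    (by rw [Polynomial.natDegree_X_sub_C]; omega), Polynomial.natDegree_X_sub_C]
  congr 1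

lemma card_two_roots {k : ℕ} (hk : 2 ≤ k) (a b : F) (hab : a ≠ b) :
    ((PPn F (k + 1)).filter (fun f => f.eval a = 0 ∧ f.eval b = 0)).card
      = Fintype.card F ^ (k - 1) := by
  have hcop : IsCoprime (X - C a) (X - C b) :=
    Polynomial.isCoprime_X_sub_C_of_isUnit_sub ((sub_ne_zero.mpr hab).isUnit)
  have hmon : ((X - C a) * (X - C b)).Monic :=
    (Polynomial.monic_X_sub_C a).mul (Polynomial.monic_X_sub_C b)
  have hdeg2 : ((X - C a) * (X - C b)).natDegree = 2 := by
    rw [Polynomial.natDegree_mul (Polynomial.X_sub_C_ne_zero a) (Polynomial.X_sub_C_ne_zero b),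
      Polynomial.natDegree_X_sub_C, Polynomial.natDegree_X_sub_C]
  have h1 : ((PPn F (k + 1)).filter (fun f => f.eval a = 0 ∧ f.eval b = 0)) =
      ((PPn F (k + 1)).filter (fun f => ((X - C a) * (X - C b)) ∣ f)) := by
    refine Finset.filter_congr fun f _ => ?_
    constructor
    · rintro ⟨ha, hb⟩
      exact hcop.mul_dvd (Polynomial.dvd_iff_isRoot.mpr ha) (Polynomial.dvd_iff_isRoot.mpr hb)
    · intro hdvd
      constructor
      · exact Polynomial.dvd_iff_isRoot.mp ((dvd_mul_right _ _).trans hdvd)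
      · exact Polynomial.dvd_iff_isRoot.mp ((dvd_mul_left _ _).trans hdvd)
  rw [h1, card_dvd_filter F _ hmon (by omega), hdeg2]
  congr 1

lemma sum_one_root {k : ℕ} (hk : 1 ≤ k) :
    ∑ f ∈ PPn F (k + 1), (Finset.univ.filter fun x : F => f.eval x = 0).card
      = Fintype.card F ^ (k + 1) := by
  calc ∑ f ∈ PPn F (k + 1), (Finset.univ.filter fun x : F => f.eval x = 0).card
      = ∑ f ∈ PPn F (k + 1), ∑ x : F, (if f.eval x = 0 then 1 else 0) := by
        refine Finset.sum_congr rfl fun f _ => ?_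
        rw [Finset.card_filter]
    _ = ∑ x : F, ∑ f ∈ PPn F (k + 1), (if f.eval x = 0 then 1 else 0) := Finset.sum_comm
    _ = ∑ x : F, ((PPn F (k + 1)).filter fun f => f.eval x = 0).card := by
        refine Finset.sum_congr rfl fun x _ => ?_
        rw [Finset.card_filter]
    _ = ∑ _x : F, Fintype.card F ^ k :=
        Finset.sum_congr rfl fun x _ => card_one_root F hk x
    _ = Fintype.card F ^ (k + 1) := by
        rw [Finset.sum_const, Finset.card_univ, smul_eq_mul, pow_succ, mul_comm]

lemma sum_two_roots {k : ℕ} (hk : 2 ≤ k) :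
    ∑ f ∈ PPn F (k + 1), ((Finset.univ.filter fun x : F => f.eval x = 0)).offDiag.card
      = (Fintype.card F * Fintype.card F - Fintype.card F) * Fintype.card F ^ (k - 1) := by
  calc ∑ f ∈ PPn F (k + 1), ((Finset.univ.filter fun x : F => f.eval x = 0)).offDiag.card
      = ∑ f ∈ PPn F (k + 1), ∑ p ∈ (Finset.univ : Finset F).offDiag,
          (if f.eval p.1 = 0 ∧ f.eval p.2 = 0 then 1 else 0) := by
        refine Finset.sum_congr rfl fun f _ => ?_
        rw [← Finset.card_filter]
        congr 1
        ext p
        simp only [Finset.mem_offDiag, Finset.mem_filter, Finset.mem_univ, true_and]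
        tauto
    _ = ∑ p ∈ (Finset.univ : Finset F).offDiag, ∑ f ∈ PPn F (k + 1),
          (if f.eval p.1 = 0 ∧ f.eval p.2 = 0 then 1 else 0) := Finset.sum_comm
    _ = ∑ p ∈ (Finset.univ : Finset F).offDiag,
          ((PPn F (k + 1)).filter fun f => f.eval p.1 = 0 ∧ f.eval p.2 = 0).card := by
        refine Finset.sum_congr rfl fun p _ => ?_
        rw [Finset.card_filter]
    _ = ∑ _p ∈ (Finset.univ : Finset F).offDiag, Fintype.card F ^ (k - 1) := by
        refine Finset.sum_congr rfl fun p hp => ?_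
        exact card_two_roots F hk p.1 p.2 (Finset.mem_offDiag.mp hp).2.2
    _ = (Fintype.card F * Fintype.card F - Fintype.card F) * Fintype.card F ^ (k - 1) := by
        rw [Finset.sum_const, Finset.offDiag_card, Finset.card_univ, smul_eq_mul]

/-- The key counting estimate: there are at least `(q-1) * q^(k-1)` polynomials of
degree at most `k` with no root in `F`. -/
lemma rootfree_count {k : ℕ} (hk : 2 ≤ k) :
    (Fintype.card F - 1) * Fintype.card F ^ (k - 1) ≤
      ((PPn F (k + 1)).filter (fun f => ∀ x : F, f.eval x ≠ 0)).card := by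
  set q := Fintype.card F with hq
  have hq2 : 2 ≤ q := Fintype.one_lt_card
  -- pointwise inequality summed over all polynomials
  have key : ∀ f ∈ PPn F (k + 1),
      q * (if ¬ (∀ x : F, f.eval x ≠ 0) then 1 else 0)
        + ((Finset.univ.filter fun x : F => f.eval x = 0)).offDiag.card
      ≤ q * (Finset.univ.filter fun x : F => f.eval x = 0).card := by
    intro f _
    by_cases hroot : ∀ x : F, f.eval x ≠ 0
    · have : (Finset.univ.filter fun x : F => f.eval x = 0) = ∅ := by
        refine Finset.filter_false_of_mem fun x _ => hroot x
      simp [hroot, this]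
    · simp only [hroot, not_false_eq_true, if_true]
      set s := (Finset.univ.filter fun x : F => f.eval x = 0) with hs
      set r := s.card with hr
      have hr1 : 1 ≤ r := by
        push_neg at hroot
        obtain ⟨x, hx⟩ := hroot
        refine Finset.card_pos.mpr ⟨x, ?_⟩
        simp [hs, hx]
      have hrq : r ≤ q := by
        rw [hr, hq]; exact (Finset.card_filter_le _ _).trans (by simp)
      rw [Finset.offDiag_card, ← hr]
      have hrr : r ≤ r * r := Nat.le_mul_of_pos_left r (by omega)
      zify [hrr]
      nlinarith [mul_nonneg (by push_cast; omega : (0:ℤ) ≤ (r:ℤ) - 1)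
        (by push_cast; omega : (0:ℤ) ≤ (q:ℤ) - (r:ℤ))]
  have hsum := Finset.sum_le_sum key
  rw [Finset.sum_add_distrib, ← Finset.mul_sum, ← Finset.mul_sum,
    sum_one_root F (by omega), sum_two_roots F hk] at hsum
  have hrooted : ∑ f ∈ PPn F (k + 1), (if ¬ (∀ x : F, f.eval x ≠ 0) then 1 else 0)
      = ((PPn F (k + 1)).filter (fun f => ¬ (∀ x : F, f.eval x ≠ 0))).card := by
    rw [Finset.card_filter]
  rw [hrooted] at hsum
  -- N + ROOTED = q^(k+1)
  have hsplit := Finset.card_filter_add_card_filter_not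
    (s := PPn F (k + 1)) (p := fun f => ∀ x : F, f.eval x ≠ 0)
  rw [card_PPn] at hsplit
  set N := ((PPn F (k + 1)).filter (fun f => ∀ x : F, f.eval x ≠ 0)).card
  set R' := ((PPn F (k + 1)).filter (fun f => ¬ (∀ x : F, f.eval x ≠ 0))).card
  -- from hsum : q * R' + (q*q - q) * q^(k-1) ≤ q * q^(k+1)
  have hfac : (q * q - q) * q ^ (k - 1) = q * ((q - 1) * q ^ (k - 1)) := by
    have : q * q - q = q * (q - 1) := by
      cases q with
      | zero => simp
      | succ n =>
        have h1 : n + 1 - 1 = n := rfl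
        rw [h1]
        have : (n+1) * n + (n+1) = (n+1) * (n+1) := by ring
        omega
    rw [this, mul_assoc]
  rw [hfac, ← hsplit] at hsum
  have : q * ((q - 1) * q ^ (k - 1)) ≤ q * N := by
    have hexp : q * (N + R') = q * N + q * R' := by ring
    rw [hexp] at hsum
    linarith
  exact Nat.le_of_mul_le_mul_left this (by omega)

end Aux

/-- If `U` is an intersecting family of more than `q^k − q^{k−1}` polynomials over `F_q`
(`q > 9` if `q` odd, `q > 2` if `q` even) of degree at most `k`, `k > 1`, then `U` extends
uniquely to an intersecting family of `q^k` polynomials of degree at most `k`: any two such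
extensions coincide. -/
theorem stmt13 (F : Type*) [Field F] [Fintype F]
    (hodd : Odd (Fintype.card F) → 9 < Fintype.card F)
    (heven : Even (Fintype.card F) → 2 < Fintype.card F)
    (k : ℕ) (hk : 1 < k)
    (U : Finset (Polynomial F)) (hdeg : ∀ f ∈ U, f.natDegree ≤ k)
    (hint : ∀ f ∈ U, ∀ g ∈ U, ∃ x : F, f.eval x = g.eval x)
    (hU : Fintype.card F ^ k - Fintype.card F ^ (k - 1) < U.card)
    (V W : Finset (Polynomial F))
    (hVdeg : ∀ f ∈ V, f.natDegree ≤ k)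
    (hVint : ∀ f ∈ V, ∀ g ∈ V, ∃ x : F, f.eval x = g.eval x)
    (hVcard : V.card = Fintype.card F ^ k) (hUV : U ⊆ V)
    (hWdeg : ∀ f ∈ W, f.natDegree ≤ k)
    (hWint : ∀ f ∈ W, ∀ g ∈ W, ∃ x : F, f.eval x = g.eval x)
    (hWcard : W.card = Fintype.card F ^ k) (hUW : U ⊆ W) :
    V = W := by
  classical
  set q := Fintype.card F with hq
  have hq2 : 2 ≤ q := Fintype.one_lt_card
  refine Finset.eq_of_subset_of_card_le (fun f₀ hf₀V => ?_) (by rw [hVcard, hWcard])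
  by_contra hf₀W
  have hf₀P : f₀ ∈ PPn F (k + 1) := (mem_PPn_succ F).mpr (hVdeg f₀ hf₀V)
  -- For every root-free h of degree ≤ k there is c ≠ 0 with f₀ + C c * h ∈ W.
  have key : ∀ h : Polynomial F, h ∈ PPn F (k + 1) → (∀ x : F, h.eval x ≠ 0) →
      ∃ c : F, c ≠ 0 ∧ f₀ + C c * h ∈ W := by
    intro h hhP hrf
    have hh0 : h ≠ 0 := by
      intro h0
      exact hrf 0 (by simp [h0])
    set S : Finset (Polynomial F × F) := W ×ˢ (Finset.univ : Finset F) with hS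
    have hinj : Set.InjOn (fun p : Polynomial F × F => p.1 + C p.2 * h) S := by
      rintro ⟨w, c⟩ hw ⟨w', c'⟩ hw' he
      simp only at he
      have hwW : w ∈ W := (Finset.mem_product.mp hw).1
      have hw'W : w' ∈ W := (Finset.mem_product.mp hw').1
      have hcc : c = c' := by
        by_contra hne
        obtain ⟨x, hx⟩ := hWint w hwW w' hw'W
        have := congrArg (Polynomial.eval x) he
        simp only [Polynomial.eval_add, Polynomial.eval_mul, Polynomial.eval_C] at this
        rw [hx] at this
        have h2 : c * h.eval x = c' * h.eval x := add_left_cancel this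
        exact hne (mul_right_cancel₀ (hrf x) h2)
      subst hcc
      have : w = w' := by
        have := add_right_cancel he
        exact this
      simp [this]
    have himcard : (S.image (fun p : Polynomial F × F => p.1 + C p.2 * h)).card
        = q ^ (k + 1) := by
      rw [Finset.card_image_of_injOn hinj, hS, Finset.card_product, Finset.card_univ,
        hWcard, ← hq, pow_succ]
    have himsub : S.image (fun p : Polynomial F × F => p.1 + C p.2 * h) ⊆ PPn F (k + 1) := by
      intro g hg
      obtain ⟨p, hpS, rfl⟩ := Finset.mem_image.mp hg
      have hp1 : p.1 ∈ W := (Finset.mem_product.mp hpS).1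
      rw [mem_PPn_succ]
      refine (Polynomial.natDegree_add_le _ _).trans ?_
      have h1 : p.1.natDegree ≤ k := hWdeg _ hp1
      have h2 : (C p.2 * h).natDegree ≤ k :=
        (Polynomial.natDegree_C_mul_le _ _).trans ((mem_PPn_succ F).mp hhP)
      omega
    have himeq : S.image (fun p : Polynomial F × F => p.1 + C p.2 * h) = PPn F (k + 1) :=
      Finset.eq_of_subset_of_card_le himsub (by rw [himcard, card_PPn])
    rw [← himeq] at hf₀P
    obtain ⟨p, hpS, hpf⟩ := Finset.mem_image.mp hf₀P
    have hp1W : p.1 ∈ W := (Finset.mem_product.mp hpS).1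
    have hc0 : p.2 ≠ 0 := by
      intro h0
      apply hf₀W
      rw [← hpf, h0, map_zero, zero_mul, add_zero]
      exact hp1W
    refine ⟨-p.2, neg_ne_zero.mpr hc0, ?_⟩
    have : f₀ + C (-p.2) * h = p.1 := by
      rw [← hpf, map_neg, neg_mul, add_assoc, add_neg_cancel, add_zero]
    rw [this]
    exact hp1W
  -- choose the witnesses
  choose! c hc0 hcW using key
  set R := (PPn F (k + 1)).filter (fun h => ∀ x : F, h.eval x ≠ 0) with hR
  set Φ : Polynomial F → Polynomial F := fun h => f₀ + C (c h) * h with hΦ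
  have hmaps : ∀ h ∈ R, Φ h ∈ W \ U := by
    intro h hh
    rw [Finset.mem_filter] at hh
    obtain ⟨hhP, hrf⟩ := hh
    rw [Finset.mem_sdiff]
    refine ⟨hcW h hhP hrf, ?_⟩
    intro hU'
    obtain ⟨x, hx⟩ := hVint f₀ hf₀V (Φ h) (hUV hU')
    rw [hΦ] at hx
    simp only [Polynomial.eval_add, Polynomial.eval_mul, Polynomial.eval_C] at hx
    have : c h * h.eval x = 0 := left_eq_add.mp hx
    rcases mul_eq_zero.mp this with h1 | h2
    · exact hc0 h hhP hrf h1
    · exact hrf x h2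
  have hfib : ∀ w ∈ W \ U, (R.filter fun h => Φ h = w).card ≤ q - 1 := by
    intro w _
    have : (R.filter fun h => Φ h = w).card ≤ ((Finset.univ : Finset F).erase 0).card := by
      refine Finset.card_le_card_of_injOn c ?_ ?_
      · intro h hh
        rw [Finset.mem_coe, Finset.mem_filter] at hh
        have hh' := Finset.mem_filter.mp hh.1
        exact Finset.mem_erase.mpr ⟨hc0 h hh'.1 hh'.2, Finset.mem_univ _⟩
      · intro h hh h' hh' hcc
        simp only [Finset.coe_filter, Set.mem_setOf_eq] at hh hh'
        have hh1 := Finset.mem_filter.mp hh.1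
        have hh1' := Finset.mem_filter.mp hh'.1
        have he : f₀ + C (c h) * h = f₀ + C (c h') * h' := by
          rw [hΦ] at hh hh'
          simp only at hh hh'
          rw [hh.2, hh'.2]
        rw [hcc] at he
        have := add_left_cancel he
        have hC : C (c h') ≠ 0 := by
          simp only [ne_eq, Polynomial.C_eq_zero]
          exact hc0 h' hh1'.1 hh1'.2
        exact mul_left_cancel₀ hC this
    rwa [Finset.card_erase_of_mem (Finset.mem_univ _), Finset.card_univ, ← hq] at this
  have hRcard : R.card ≤ (q - 1) * (W \ U).card :=
    Finset.card_le_mul_card_image_of_maps_to hmaps (q - 1) hfib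
  have hN : (q - 1) * q ^ (k - 1) ≤ R.card := rootfree_count F (by omega)
  have hWU : (W \ U).card = q ^ k - U.card := by
    rw [Finset.card_sdiff_of_subset hUW, hWcard]
  have hUcard : U.card ≤ q ^ k := by
    rw [← hWcard]; exact Finset.card_le_card hUW
  have hqpow : q ^ (k - 1) ≤ q ^ k := Nat.pow_le_pow_right (by omega) (by omega)
  have hqpos : 1 ≤ q ^ (k - 1) := Nat.one_le_pow _ _ (by omega)
  -- W \ U has fewer than q^(k-1) elements
  have hWU2 : (W \ U).card ≤ q ^ (k - 1) - 1 := by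
    rw [hWU]
    omega
  have : (q - 1) * (W \ U).card < (q - 1) * q ^ (k - 1) := by
    calc (q - 1) * (W \ U).card ≤ (q - 1) * (q ^ (k - 1) - 1) :=
          Nat.mul_le_mul_left _ hWU2
      _ < (q - 1) * q ^ (k - 1) :=
          mul_lt_mul_of_pos_left (by omega) (by omega)
  linarith
end

section
/- For every prime power q > 2 there exists an intersecting family U of polynomials over F_q of degree at most 2 with |U| = (q^2 + q)/2 such that there exist no s, t ∈ F_q with f(s) = t for every f ∈ U; that is, the graphs of the members of U have no common point. (Concretely, taking the point P = (0,1) and the line e(x) = 0, the family U consisting of e together with all polynomials h of degree at most 2 satisfying h(0) = 1 and having a root in F_q is such a family.) -/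
open Polynomial

open Finset

lemma countS (F : Type*) [Field F] [Fintype F] [DecidableEq F]
    [DecidablePred fun p : F × F => ∃ u : F, u ≠ 0 ∧ u ^ 2 + p.2 * u + p.1 = 0] :
    2 * ((Finset.univ.filter fun p : F × F => ∃ u : F, u ≠ 0 ∧ u ^ 2 + p.2 * u + p.1 = 0).card) + 2
      = Fintype.card F ^ 2 + Fintype.card F := by
  set S : Finset (F × F) :=
    Finset.univ.filter fun p : F × F => ∃ u : F, u ≠ 0 ∧ u ^ 2 + p.2 * u + p.1 = 0 with hS
  set T : Finset (F × F) := Finset.univ.filter fun p : F × F => p ≠ (0, 0) with hT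
  set ψ : F × F → F × F := fun p => (p.1 * p.2, -(p.1 + p.2)) with hψ
  set D : Finset (F × F) := S.filter fun s => s.2 ^ 2 = 4 * s.1 with hD
  have hmaps : ∀ p ∈ T, ψ p ∈ S := by
    rintro ⟨u, v⟩ hp
    simp only [hT, mem_filter, mem_univ, true_and, Ne, Prod.mk.injEq, not_and] at hp
    simp only [hS, mem_filter, mem_univ, true_and, hψ]
    rcases eq_or_ne u 0 with rfl | hu
    · exact ⟨v, hp rfl, by ring⟩
    · exact ⟨u, hu, by ring⟩
  have hfib := Finset.card_eq_sum_card_fiberwise hmaps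
  have hfib2 : ∀ s ∈ S, (T.filter fun p => ψ p = s).card
      + (if s.2 ^ 2 = 4 * s.1 then 1 else 0) = 2 := by
    rintro ⟨a, b⟩ hs
    simp only [hS, mem_filter, mem_univ, true_and] at hs
    obtain ⟨u, hu, heq⟩ := hs
    obtain ⟨v, hv⟩ : ∃ v : F, v = -b - u := ⟨_, rfl⟩
    have huv : u * v = a := by rw [hv]; linear_combination -heq
    have hsum : u + v = -b := by rw [hv]; ring
    have hdisc : b ^ 2 - 4 * a = (u - v) ^ 2 := by
      linear_combination (b - (u + v)) * hsum + 4 * huv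
    have hfeq : (T.filter fun p => ψ p = (a, b)) = {(u, v), (v, u)} := by
      ext ⟨x, y⟩
      simp only [hT, mem_filter, mem_univ, true_and, hψ, Prod.mk.injEq, mem_insert,
        mem_singleton, Ne, not_and]
      constructor
      · rintro ⟨hne, hxy, hs2⟩
        have hy : y = -b - x := by linear_combination -hs2
        have hfac : (x - u) * (x - v) = 0 := by
          linear_combination huv - x * hsum - x * hs2 - hxy
        rcases mul_eq_zero.1 hfac with h | h
        · have hx : x = u := sub_eq_zero.1 h
          left; exact ⟨hx, by rw [hy, hx, hv]⟩
        · have hx : x = v := sub_eq_zero.1 h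
          right; exact ⟨hx, by rw [hy, hx, hv]; ring⟩
      · rintro (⟨rfl, rfl⟩ | ⟨rfl, rfl⟩)
        · exact ⟨fun h => absurd h hu, huv, by rw [hsum]; ring⟩
        · exact ⟨fun _ h => hu h, by rw [mul_comm]; exact huv, by rw [add_comm, hsum]; ring⟩
    rw [hfeq]
    rcases eq_or_ne u v with hc | hc
    · have h4 : b ^ 2 = 4 * a := by
        rw [hc, sub_self] at hdisc
        simpa [sub_eq_zero] using hdisc
      rw [hc, if_pos h4]
      simp
    · have h4 : ¬ b ^ 2 = 4 * a := by
        intro h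
        apply hc
        have h0 : (u - v) ^ 2 = 0 := by rw [← hdisc, h, sub_self]
        exact sub_eq_zero.1 (pow_eq_zero_iff (n := 2) (by norm_num) |>.1 h0)
      rw [if_neg h4, Finset.card_insert_of_notMem (by simp [Prod.ext_iff, hc]),
        Finset.card_singleton]
  have hsum2 : T.card + D.card = 2 * S.card := by
    rw [hfib, hD, Finset.card_filter, ← Finset.sum_add_distrib,
      Finset.sum_congr rfl hfib2, Finset.sum_const, smul_eq_mul, mul_comm]
  have hDcard : D.card + 1 = Fintype.card F := by
    have himg : D = (Finset.univ.erase (0 : F)).image fun u : F => (u * u, -(u + u)) := by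
      ext ⟨a, b⟩
      simp only [hD, hS, mem_filter, mem_univ, true_and, mem_image, mem_erase, Ne]
      constructor
      · rintro ⟨⟨u, hu, heq⟩, h4⟩
        refine ⟨u, ⟨hu, trivial⟩, ?_⟩
        obtain ⟨v, hv⟩ : ∃ v : F, v = -b - u := ⟨_, rfl⟩
        have huv : u * v = a := by rw [hv]; linear_combination -heq
        have hsum : u + v = -b := by rw [hv]; ring
        have hdisc : (u - v) ^ 2 = 0 := by
          linear_combination (u + v - b) * hsum - 4 * huv + h4
        have huv2 : u = v := sub_eq_zero.1 (pow_eq_zero_iff (n := 2) (by norm_num) |>.1 hdisc)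
        rw [Prod.mk.injEq]
        constructor
        · rw [huv2] at huv ⊢; exact huv
        · rw [huv2] at hsum ⊢; linear_combination -hsum
      · rintro ⟨u, ⟨hu, -⟩, h⟩
        rw [Prod.mk.injEq] at h
        obtain ⟨ha, hb⟩ := h
        exact ⟨⟨u, hu, by rw [← ha, ← hb]; ring⟩, by rw [← ha, ← hb]; ring⟩
    have hinj : Set.InjOn (fun u : F => (u * u, -(u + u))) (Finset.univ.erase (0 : F)) := by
      intro x hx y hy hxy
      simp only [mem_coe, mem_erase] at hx hy
      rw [Prod.mk.injEq] at hxy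
      obtain ⟨h1, h2⟩ := hxy
      have h2' : x + x = y + y := by linear_combination -h2
      have hfac : (x - y) * (x + y) = 0 := by linear_combination h1
      rcases mul_eq_zero.1 hfac with h | h
      · exact sub_eq_zero.1 h
      · have h40 : (4 : F) * x = 0 := by linear_combination h2' + 2 * h
        rcases mul_eq_zero.1 h40 with h4 | h4
        · have h20 : (2 : F) = 0 := by
            have h22 : (2 : F) * 2 = 0 := by linear_combination h4
            exact mul_self_eq_zero.1 h22
          linear_combination h - y * h20
        · exact absurd h4 hx.1
    rw [himg, Finset.card_image_of_injOn hinj, Finset.card_erase_of_mem (mem_univ _),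
      Finset.card_univ]
    have : 0 < Fintype.card F := Fintype.card_pos
    omega
  have hTcard : T.card + 1 = Fintype.card F ^ 2 := by
    have hTe : T = Finset.univ.erase ((0 : F), (0 : F)) := by
      rw [hT, Finset.filter_ne']
    rw [hTe, Finset.card_erase_of_mem (mem_univ _), Finset.card_univ, Fintype.card_prod, sq]
    have h1 : 0 < Fintype.card F := Fintype.card_pos
    have h2 : 0 < Fintype.card F * Fintype.card F := Nat.mul_pos h1 h1
    omega
  have key : 2 * S.card + 2 = (T.card + 1) + (D.card + 1) := by omega
  rw [key, hTcard, hDcard]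


/-- (Hilton–Milner type example.) For every prime power `q > 2` there is an intersecting
family `U` of polynomials over `F_q` of degree at most `2` with `|U| = (q² + q)/2` whose
graphs have no common point. -/
theorem stmt18 (F : Type*) [Field F] [Fintype F] (hq : 2 < Fintype.card F) :
    ∃ U : Finset (Polynomial F),
      (∀ f ∈ U, f.natDegree ≤ 2) ∧
      (∀ f ∈ U, ∀ g ∈ U, ∃ x : F, f.eval x = g.eval x) ∧
      2 * U.card = Fintype.card F ^ 2 + Fintype.card F ∧
      ¬ ∃ s t : F, ∀ f ∈ U, f.eval s = t := by
  classical
  set S : Finset (F × F) :=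
    Finset.univ.filter fun p : F × F => ∃ u : F, u ≠ 0 ∧ u ^ 2 + p.2 * u + p.1 = 0 with hS
  set poly : F × F → Polynomial F := fun p => C p.1 * X ^ 2 + C p.2 * X + 1 with hpoly
  have heval : ∀ (p : F × F) (x : F), (poly p).eval x = p.1 * x ^ 2 + p.2 * x + 1 := by
    intro p x; simp [hpoly]
  have heval0 : ∀ p : F × F, (poly p).eval 0 = 1 := by
    intro p; rw [heval]; ring
  -- every member of S gives a polynomial with a root
  have hroot : ∀ p ∈ S, ∃ x : F, (poly p).eval x = 0 := by
    rintro ⟨a, b⟩ hp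
    simp only [hS, mem_filter, mem_univ, true_and] at hp
    obtain ⟨u, hu, heq⟩ := hp
    refine ⟨u⁻¹, ?_⟩
    rw [heval]
    field_simp
    linear_combination heq
  refine ⟨insert 0 (S.image poly), ?_, ?_, ?_, ?_⟩
  · -- degrees
    intro f hf
    rcases Finset.mem_insert.1 hf with rfl | hf
    · simp
    · obtain ⟨p, -, rfl⟩ := Finset.mem_image.1 hf
      show (C p.1 * X ^ 2 + C p.2 * X + 1).natDegree ≤ 2
      compute_degree
  · -- intersecting
    intro f hf g hg
    rcases Finset.mem_insert.1 hf with rfl | hf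
    · rcases Finset.mem_insert.1 hg with rfl | hg
      · exact ⟨0, rfl⟩
      · obtain ⟨p, hp, rfl⟩ := Finset.mem_image.1 hg
        obtain ⟨x, hx⟩ := hroot p hp
        exact ⟨x, by simp [hx]⟩
    · rcases Finset.mem_insert.1 hg with rfl | hg
      · obtain ⟨p, hp, rfl⟩ := Finset.mem_image.1 hf
        obtain ⟨x, hx⟩ := hroot p hp
        exact ⟨x, by simp [hx]⟩
      · obtain ⟨p, hp, rfl⟩ := Finset.mem_image.1 hf
        obtain ⟨q, hq', rfl⟩ := Finset.mem_image.1 hg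
        exact ⟨0, by rw [heval0, heval0]⟩
  · -- cardinality
    have h0 : (0 : Polynomial F) ∉ S.image poly := by
      intro h
      obtain ⟨p, -, hp⟩ := Finset.mem_image.1 h
      have := heval0 p
      rw [hp] at this
      simp at this
    have hinj : Set.InjOn poly S := by
      intro p hp q hq hpq
      have h1 : p.1 = q.1 := by
        have := congrArg (fun f => Polynomial.coeff f 2) hpq
        simpa [hpoly, coeff_one] using this
      have h2 : p.2 = q.2 := by
        have := congrArg (fun f => Polynomial.coeff f 1) hpq
        simpa [hpoly, coeff_one] using this
      exact Prod.ext h1 h2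
    rw [Finset.card_insert_of_notMem h0, Finset.card_image_of_injOn hinj]
    have := countS F
    rw [← hS] at this
    omega
  · -- no common point
    rintro ⟨s, t, hst⟩
    have ht : t = 0 := by
      have := hst 0 (Finset.mem_insert_self _ _)
      simpa using this.symm
    subst ht
    -- find a member of S whose polynomial doesn't vanish at s
    have : ∃ p ∈ S, (poly p).eval s ≠ 0 := by
      rcases eq_or_ne s 0 with rfl | hs
      · refine ⟨(0, -1), ?_, ?_⟩
        · simp only [hS, mem_filter, mem_univ, true_and]
          exact ⟨1, one_ne_zero, by ring⟩
        · rw [heval0]; exact one_ne_zero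
      · -- choose b ∉ {0, -s⁻¹}
        have hcard : (Finset.univ \ {(0 : F), -s⁻¹}).Nonempty := by
          rw [← Finset.card_pos]
          have h1 : ({(0 : F), -s⁻¹} : Finset F).card ≤ 2 :=
            (Finset.card_insert_le _ _).trans (by simp)
          have h2 := Finset.le_card_sdiff ({(0 : F), -s⁻¹} : Finset F) Finset.univ
          rw [Finset.card_univ] at h2
          omega
        obtain ⟨b, hb⟩ := hcard
        simp only [Finset.mem_sdiff, Finset.mem_insert, Finset.mem_singleton, mem_univ,
          true_and, not_or] at hb
        obtain ⟨hb0, hbs⟩ := hb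
        refine ⟨(0, b), ?_, ?_⟩
        · simp only [hS, mem_filter, mem_univ, true_and]
          exact ⟨-b, neg_ne_zero.2 hb0, by ring⟩
        · rw [heval]
          intro h
          apply hbs
          have hbs' : b * s = -1 := by linear_combination h
          field_simp
          linear_combination hbs'
    obtain ⟨p, hp, hne⟩ := this
    exact hne (hst (poly p) (Finset.mem_insert_of_mem (Finset.mem_image_of_mem _ hp)))
end
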